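/- arXiv:2509.06352 — 3 statements merged into one kernel-verified Lean document; each statement's English description precedes it below -/
import Mathlib

section
/- (Minimal amplitude and non-concentration for piecewise constant coefficients.) Let N ∈ ℕ, 0 = h_{−1} < h₀ < ⋯ < h_N = H, and let c : [0,H] → ℝ be piecewise constant with c(y) = c_{j+1} ∈ [c_m, c_M] for y ∈ (h_j, h_{j+1}), j = −1, …, N−1; let V := Σ_{j=0}^{N−1} |c_{j+1} − c_j| be its total variation. Fix ε > 0 and μ₁ > 0. Then: (1) there exists r > 0 depending only on ε, c_m, c_M, V, H, μ₁ (in particular not on N or on the partition points) such that for every μ ≥ μ₁, λ ≥ (c_M + ε)μ², and every normalized Dirichlet solution u (with flux v) of the reduced problem, u(y)² + v(y)² ≥ r² for all y ∈ [0,H]; (2) for every interval (a,b) ⊆ (0,H) there exist d > 0 and λ₀ > 0, depending only on b − a, c_m, c_M, ε, V, H, μ₁, such that ∫_a^b u² ≥ d whenever in addition λ > λ₀. -/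
open MeasureTheory Set Filter Topology

noncomputable section

/-- `u` (with flux `v = c·u'` and weak derivative `g = u'`) is a solution of the reduced
problem `(c u')' + (λ - c μ²) u = 0` on the interval `[a, b]`:
`u` is absolutely continuous with derivative `g ∈ L²`, the flux `v` agrees a.e. with `c·g`,
and `v` is absolutely continuous with derivative `(c μ² - λ)·u`. -/
def IsReducedSolutionOn (a b : ℝ) (c : ℝ → ℝ) (μ lam : ℝ) (u v g : ℝ → ℝ) : Prop :=
  IntervalIntegrable g volume a b ∧
  IntervalIntegrable (fun t => g t ^ 2) volume a b ∧
  (∀ y ∈ Set.Icc a b, u y = u a + ∫ t in a..y, g t) ∧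
  (∀ᵐ y ∂volume.restrict (Set.Ioo a b), v y = c y * g y) ∧
  IntervalIntegrable (fun t => (c t * μ ^ 2 - lam) * u t) volume a b ∧
  (∀ y ∈ Set.Icc a b, v y = v a + ∫ t in a..y, (c t * μ ^ 2 - lam) * u t)

/-- A coefficient on `[0, H]`: measurable and bounded between `cm` and `cM`. -/
def IsCoeff (H cm cM : ℝ) (c : ℝ → ℝ) : Prop :=
  Measurable c ∧ ∀ y ∈ Set.Icc (0 : ℝ) H, cm ≤ c y ∧ c y ≤ cM

section Aux
variable {cm cM H ε μ₁ V : ℝ} {N : ℕ} {h cv : ℕ → ℝ} {c : ℝ → ℝ}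
  {μ lam : ℝ} {u v g : ℝ → ℝ}

-- partition monotonicity
lemma part_mono (hmono : ∀ j ≤ N, h j < h (j + 1)) :
    ∀ i j, i ≤ j → j ≤ N + 1 → h i ≤ h j := by
  intro i j hij hjN
  induction j with
  | zero => simp_all
  | succ n ih =>
    rcases Nat.eq_or_lt_of_le hij with rfl | hlt
    · exact le_rfl
    · exact (ih (Nat.lt_succ_iff.mp hlt) (le_trans (Nat.le_succ n) hjN)).trans
        (hmono n (Nat.succ_le_succ_iff.mp hjN)).le

lemma part_cover (hmono : ∀ j ≤ N, h j < h (j + 1)) :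
    ∀ n ≤ N + 1, 1 ≤ n → ∀ y ∈ Set.Icc (h 0) (h n), ∃ j ≤ N, y ∈ Set.Icc (h j) (h (j + 1)) := by
  intro n hn h1 y hy
  induction n with
  | zero => omega
  | succ m ih =>
    by_cases hym : y ≤ h m
    · rcases Nat.eq_zero_or_pos m with rfl | hm
      · have : y = h 0 := le_antisymm hym hy.1
        exact ⟨0, Nat.zero_le _, hy.1, this.le.trans (hmono 0 (Nat.zero_le _)).le⟩
      · exact ih (by omega) hm ⟨hy.1, hym⟩
    · exact ⟨m, by omega, ⟨le_of_not_ge hym, hy.2⟩⟩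

end Aux

noncomputable def auxK (cm cM ε : ℝ) : ℝ := 3 * (cM + ε) / (cm * ε)
noncomputable def auxA (cm cM ε : ℝ) : ℝ := cm * ε / (cM + ε)
noncomputable def auxk (cm cM ε V : ℝ) : ℝ := Real.exp (auxK cm cM ε * V) ^ 2

section Arith
variable {cm cM ε μ lam x y : ℝ}

lemma arith_pos (hcm : 0 < cm) (hcmM : cm < cM) (hε : 0 < ε) :
    0 < auxA cm cM ε ∧ 0 < auxK cm cM ε ∧ auxK cm cM ε * auxA cm cM ε = 3 := by
  have hcM0 : 0 < cM := hcm.trans hcmM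
  have hcMε : 0 < cM + ε := by linarith
  refine ⟨by unfold auxA; positivity, by unfold auxK; positivity, ?_⟩
  unfold auxK auxA; field_simp

lemma arith_wbounds (hcm : 0 < cm) (hcmM : cm < cM) (hε : 0 < ε) (hlam0 : 0 < lam)
    (hlam : (cM + ε) * μ ^ 2 ≤ lam) (hx1 : cm ≤ x) (hx2 : x ≤ cM) :
    auxA cm cM ε * lam ≤ x * (lam - x * μ ^ 2) ∧ x * (lam - x * μ ^ 2) ≤ cM * lam := by
  have hcM0 : 0 < cM := hcm.trans hcmM
  have hcMε : 0 < cM + ε := by linarith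
  have e1 : x * μ ^ 2 * (cM + ε) ≤ cM * lam := by
    calc x * μ ^ 2 * (cM + ε) ≤ cM * (μ ^ 2 * (cM + ε)) := by
          nlinarith [mul_nonneg (mul_nonneg (sub_nonneg.2 hx2) (sq_nonneg μ)) hcMε.le]
    _ ≤ cM * lam := by nlinarith
  have e2 : ε * lam ≤ (lam - x * μ ^ 2) * (cM + ε) := by nlinarith
  have e3 : ε * lam / (cM + ε) ≤ lam - x * μ ^ 2 := by
    rw [div_le_iff₀ hcMε]; linarith
  constructor
  · calc auxA cm cM ε * lam = cm * (ε * lam / (cM + ε)) := by unfold auxA; ring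
    _ ≤ x * (lam - x * μ ^ 2) :=
      mul_le_mul hx1 e3 (by positivity) (le_trans hcm.le hx1)
  · have h1 : 0 ≤ lam - x * μ ^ 2 := by nlinarith
    have h2 : lam - x * μ ^ 2 ≤ lam := by nlinarith [sq_nonneg μ]
    calc x * (lam - x * μ ^ 2) ≤ cM * (lam - x * μ ^ 2) :=
          mul_le_mul_of_nonneg_right hx2 h1
    _ ≤ cM * lam := by nlinarith

lemma arith_wstep (hcm : 0 < cm) (hcmM : cm < cM) (hε : 0 < ε) (hlam0 : 0 < lam)
    (hlam : (cM + ε) * μ ^ 2 ≤ lam) (hx1 : cm ≤ x) (hx2 : x ≤ cM)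
    (hy1 : cm ≤ y) (hy2 : y ≤ cM) :
    y * (lam - y * μ ^ 2) ≤ Real.exp (auxK cm cM ε * |y - x|) * (x * (lam - x * μ ^ 2)) := by
  obtain ⟨hα, hK, hKα⟩ := arith_pos hcm hcmM hε
  have hcM0 : 0 < cM := hcm.trans hcmM
  have hcMε : 0 < cM + ε := by linarith
  have hWx := arith_wbounds hcm hcmM hε hlam0 hlam hx1 hx2
  have hWy := arith_wbounds hcm hcmM hε hlam0 hlam hy1 hy2
  have hμlam : μ ^ 2 * (cM + ε) ≤ lam := by linarith [hlam, mul_comm (cM + ε) (μ ^ 2)]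
  have hsum : 0 ≤ (y + x) * μ ^ 2 := by nlinarith [sq_nonneg μ]
  have hsum2 : (y + x) * μ ^ 2 ≤ 2 * lam := by nlinarith [sq_nonneg μ]
  have habs : |lam - (y + x) * μ ^ 2| ≤ 3 * lam := abs_le.2 ⟨by linarith, by linarith⟩
  have hdiff : |y * (lam - y * μ ^ 2) - x * (lam - x * μ ^ 2)|
      ≤ auxK cm cM ε * |y - x| * (auxA cm cM ε * lam) := by
    have e1 : y * (lam - y * μ ^ 2) - x * (lam - x * μ ^ 2)
        = (y - x) * (lam - (y + x) * μ ^ 2) := by ring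
    rw [e1, abs_mul]
    calc |y - x| * |lam - (y + x) * μ ^ 2| ≤ |y - x| * (3 * lam) :=
          mul_le_mul_of_nonneg_left habs (abs_nonneg _)
    _ = auxK cm cM ε * |y - x| * (auxA cm cM ε * lam) := by
        rw [show (3:ℝ) = auxK cm cM ε * auxA cm cM ε from hKα.symm]; ring
  have ht : 0 ≤ auxK cm cM ε * |y - x| := mul_nonneg hK.le (abs_nonneg _)
  have hexp : auxK cm cM ε * |y - x| + 1 ≤ Real.exp (auxK cm cM ε * |y - x|) :=
    Real.add_one_le_exp _
  have h2 := (abs_le.1 hdiff).2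
  have hWxpos : 0 < x * (lam - x * μ ^ 2) := lt_of_lt_of_le (by positivity) hWx.1
  nlinarith [mul_le_mul_of_nonneg_left hWx.1 ht]

lemma arith_estep {X P Q W1 W2 : ℝ} (hX : 1 ≤ X) (hP : 0 ≤ P) (hQ : 0 ≤ Q)
    (hW1 : 0 ≤ W1) (hW2 : W2 ≤ X * W1) : Q + W2 * P ≤ X * (Q + W1 * P) := by
  nlinarith

end Arith

section Main
variable {cm cM H ε μ₁ V : ℝ} {N : ℕ} {h cv : ℕ → ℝ} {c : ℝ → ℝ}
  {μ lam : ℝ} {u v g : ℝ → ℝ}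

lemma aux_main (hcm : 0 < cm) (hcmM : cm < cM) (hH : 0 < H)
    (hε : 0 < ε) (hμ₁ : 0 < μ₁) (hV : 0 ≤ V)
    (h0 : h 0 = 0) (hN : h (N + 1) = H)
    (hmono : ∀ j ≤ N, h j < h (j + 1))
    (hcv : ∀ j ≤ N, cv j ∈ Set.Icc cm cM)
    (hc : ∀ j ≤ N, ∀ y ∈ Set.Ioo (h j) (h (j + 1)), c y = cv j)
    (hVsum : (∑ j ∈ Finset.range N, |cv (j + 1) - cv j|) ≤ V)
    (hμ : μ₁ ≤ μ) (hlam : (cM + ε) * μ ^ 2 ≤ lam)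
    (hsol : IsReducedSolutionOn 0 H c μ lam u v g)
    (hnorm : (∫ y in (0:ℝ)..H, u y ^ 2) = 1) :
    ∃ e0 : ℝ, 0 ≤ e0 ∧
      auxA cm cM ε * lam / (auxk cm cM ε V * H) ≤ e0 ∧
      (∀ y ∈ Set.Icc (0:ℝ) H, e0 / auxk cm cM ε V - cM * lam * u y ^ 2 ≤ v y ^ 2) ∧
      (∀ y ∈ Set.Icc (0:ℝ) H, u y ^ 2 ≤ auxk cm cM ε V * e0 / (auxA cm cM ε * lam)) ∧
      (∀ y ∈ Set.Icc (0:ℝ) H, v y ^ 2 ≤ auxk cm cM ε V * e0) ∧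
      (∀ a b : ℝ, 0 ≤ a → b ≤ H → a ≤ b →
        u b * v b - u a * v a =
          ∫ t in a..b, (v t * g t + (c t * μ ^ 2 - lam) * u t ^ 2)) ∧
      (∀ a b : ℝ, 0 ≤ a → b ≤ H → a ≤ b →
        (∫ t in a..b, v t ^ 2) / cM ≤ ∫ t in a..b, v t * g t) ∧
      (∀ a b : ℝ, 0 ≤ a → b ≤ H → a ≤ b →
        -lam * ∫ t in a..b, u t ^ 2 ≤ ∫ t in a..b, (c t * μ ^ 2 - lam) * u t ^ 2) := by
  obtain ⟨hgI, hg2I, hu, hvg, hψI, hv⟩ := hsol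
  have hH' : (0:ℝ) ≤ H := hH.le
  have hcM0 : 0 < cM := hcm.trans hcmM
  have hcMε : 0 < cM + ε := by linarith
  obtain ⟨hα, hK, hKα⟩ := arith_pos hcm hcmM hε
  have hek1 : 1 ≤ Real.exp (auxK cm cM ε * V) := Real.one_le_exp (mul_nonneg hK.le hV)
  have hκ1 : 1 ≤ auxk cm cM ε V := by unfold auxk; nlinarith
  have hκ0 : 0 < auxk cm cM ε V := lt_of_lt_of_le one_pos hκ1
  have hμ0 : 0 < μ := lt_of_lt_of_le hμ₁ hμ
  have hlam0 : 0 < lam := lt_of_lt_of_le (by positivity) hlam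
  obtain ⟨W, hW⟩ : ∃ W : ℕ → ℝ, ∀ j, W j = cv j * (lam - cv j * μ ^ 2) :=
    ⟨_, fun _ => rfl⟩
  have hWlo : ∀ j ≤ N, auxA cm cM ε * lam ≤ W j := by
    intro j hj
    rw [hW]
    exact (arith_wbounds hcm hcmM hε hlam0 hlam (hcv j hj).1 (hcv j hj).2).1
  have hWpos : ∀ j ≤ N, 0 < W j :=
    fun j hj => lt_of_lt_of_le (mul_pos hα hlam0) (hWlo j hj)
  have hWhi : ∀ j ≤ N, W j ≤ cM * lam := by
    intro j hj
    rw [hW]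
    exact (arith_wbounds hcm hcmM hε hlam0 hlam (hcv j hj).1 (hcv j hj).2).2
  have hWstep : ∀ j, j + 1 ≤ N →
      W (j + 1) ≤ Real.exp (auxK cm cM ε * |cv (j + 1) - cv j|) * W j ∧
      W j ≤ Real.exp (auxK cm cM ε * |cv (j + 1) - cv j|) * W (j + 1) := by
    intro j hj1
    have hj : j ≤ N := by omega
    constructor
    · rw [hW, hW]
      exact arith_wstep hcm hcmM hε hlam0 hlam (hcv j hj).1 (hcv j hj).2
        (hcv (j+1) hj1).1 (hcv (j+1) hj1).2
    · rw [hW, hW, show |cv (j+1) - cv j| = |cv j - cv (j+1)| from abs_sub_comm _ _]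
      exact arith_wstep hcm hcmM hε hlam0 hlam (hcv (j+1) hj1).1 (hcv (j+1) hj1).2
        (hcv j hj).1 (hcv j hj).2
  -- geometry of the partition
  have hmono' := part_mono hmono
  have hIccsub : ∀ j ≤ N, Set.Icc (h j) (h (j + 1)) ⊆ Set.Icc (0:ℝ) H := by
    intro j hj x hx
    exact ⟨h0 ▸ le_trans (hmono' 0 j (Nat.zero_le _) (by omega)) hx.1,
      hN ▸ le_trans hx.2 (hmono' (j + 1) (N + 1) (by omega) le_rfl)⟩
  have hIoosub : ∀ j ≤ N, Set.Ioo (h j) (h (j + 1)) ⊆ Set.Ioo (0:ℝ) H := by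
    intro j hj x hx
    exact ⟨lt_of_le_of_lt (h0 ▸ hmono' 0 j (Nat.zero_le _) (by omega)) hx.1,
      lt_of_lt_of_le hx.2 (hN ▸ hmono' (j + 1) (N + 1) (by omega) le_rfl)⟩
  have hcover : ∀ y ∈ Set.Icc (0:ℝ) H, ∃ j ≤ N, y ∈ Set.Icc (h j) (h (j + 1)) := by
    intro y hy
    exact part_cover hmono (N + 1) le_rfl (by omega) y (by rwa [h0, hN])
  -- continuity of u and v
  have huIcc : Set.uIcc (0:ℝ) H = Set.Icc (0:ℝ) H := Set.uIcc_of_le hH'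
  set ψ : ℝ → ℝ := fun t => (c t * μ ^ 2 - lam) * u t with hψdef
  have hucont : ContinuousOn u (Set.Icc (0:ℝ) H) := by
    have h1 : ContinuousOn (fun b => ∫ t in (0:ℝ)..b, g t) (Set.Icc (0:ℝ) H) := by
      rw [← huIcc]
      exact intervalIntegral.continuousOn_primitive_interval' hgI
        (by rw [huIcc]; exact Set.left_mem_Icc.2 hH')
    exact (continuousOn_const.add h1).congr fun y hy => hu y hy
  have hvcont : ContinuousOn v (Set.Icc (0:ℝ) H) := by
    have h1 : ContinuousOn (fun b => ∫ t in (0:ℝ)..b, ψ t) (Set.Icc (0:ℝ) H) := by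
      rw [← huIcc]
      exact intervalIntegral.continuousOn_primitive_interval' hψI
        (by rw [huIcc]; exact Set.left_mem_Icc.2 hH')
    exact (continuousOn_const.add h1).congr fun y hy => hv y hy
  -- a.e. facts
  have hvg' : ∀ᵐ t : ℝ, t ∈ Set.Ioo (0:ℝ) H → v t = c t * g t :=
    (ae_restrict_iff' measurableSet_Ioo).mp hvg
  have hcvne : ∀ j ≤ N, cv j ≠ 0 := fun j hj => ne_of_gt (lt_of_lt_of_le hcm (hcv j hj).1)
  have hae : ∀ᵐ t : ℝ, ∀ j ≤ N, t ∈ Set.Ioo (h j) (h (j + 1)) →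
      c t = cv j ∧ g t = v t / cv j := by
    filter_upwards [hvg'] with t ht j hj htj
    have hct : c t = cv j := hc j hj t htj
    have := ht (hIoosub j hj htj)
    rw [hct] at this
    exact ⟨hct, by rw [this]; field_simp [hcvne j hj]⟩
  have hane : ∀ z : ℝ, ∀ᵐ t : ℝ, t ≠ z := by
    intro z
    have : volume {z} = 0 := measure_singleton z
    rw [ae_iff]
    simpa using this
  -- in-piece memberships
  have hmemIcc : ∀ j ≤ N, ∀ t ∈ Set.Ioo (h j) (h (j + 1)), t ∈ Set.Icc (0:ℝ) H :=
    fun j hj t ht => hIccsub j hj (Set.Ioo_subset_Icc_self ht)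
  have hnhds : ∀ j ≤ N, ∀ t ∈ Set.Ioo (h j) (h (j + 1)), Set.Icc (0:ℝ) H ∈ 𝓝 t := by
    intro j hj t ht
    exact Icc_mem_nhds (hIoosub j hj ht).1 (hIoosub j hj ht).2
  -- derivatives of u and v inside the pieces
  have hderiv : ∀ j ≤ N, ∀ t ∈ Set.Ioo (h j) (h (j + 1)),
      HasDerivAt u (v t / cv j) t ∧ HasDerivAt v ((cv j * μ ^ 2 - lam) * u t) t := by
    intro j hj t ht
    have hnt := hnhds j hj t ht
    have hoo : Set.Ioo (h j) (h (j + 1)) ∈ 𝓝 t := isOpen_Ioo.mem_nhds ht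
    have hucA : ContinuousAt u t := hucont.continuousAt hnt
    have hvcA : ContinuousAt v t := hvcont.continuousAt hnt
    constructor
    · -- derivative of u
      set w : ℝ → ℝ := fun s => v s / cv j with hwdef
      have hwc : ContinuousOn w (Set.Icc (0:ℝ) H) := hvcont.div_const _
      have huy : ∀ y ∈ Set.Icc (h j) (h (j + 1)),
          u y = u (h j) + ∫ s in (h j)..y, w s := by
        intro y hy
        have hyI : y ∈ Set.Icc (0:ℝ) H := hIccsub j hj hy
        have hjI : h j ∈ Set.Icc (0:ℝ) H :=
          hIccsub j hj (Set.left_mem_Icc.2 (hmono j hj).le)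
        have hint1 : IntervalIntegrable g volume 0 y :=
          hgI.mono_set (by rw [huIcc, Set.uIcc_of_le hyI.1]; exact Set.Icc_subset_Icc_right hyI.2)
        have hint2 : IntervalIntegrable g volume 0 (h j) :=
          hgI.mono_set (by rw [huIcc, Set.uIcc_of_le hjI.1]; exact Set.Icc_subset_Icc_right hjI.2)
        have h1 : u y - u (h j) = ∫ s in (h j)..y, g s := by
          rw [hu y hyI, hu (h j) hjI]
          rw [add_sub_add_left_eq_sub]
          exact intervalIntegral.integral_interval_sub_left hint1 hint2
        have h2 : (∫ s in (h j)..y, g s) = ∫ s in (h j)..y, w s := by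
          apply intervalIntegral.integral_congr_ae
          filter_upwards [hae, hane (h (j + 1))] with s hs hsne hsI
          rw [Set.uIoc_of_le hy.1] at hsI
          have hsoo : s ∈ Set.Ioo (h j) (h (j + 1)) :=
            ⟨hsI.1, lt_of_le_of_ne (le_trans hsI.2 hy.2) hsne⟩
          exact (hs j hj hsoo).2
        rw [← h2]; linarith [h1]
      have htI : t ∈ Set.Icc (0:ℝ) H := hmemIcc j hj t ht
      have hwint : IntervalIntegrable w volume (h j) t := by
        apply ContinuousOn.intervalIntegrable
        apply hwc.mono
        rw [Set.uIcc_of_le ht.1.le]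
        exact Set.Icc_subset_Icc (hIccsub j hj (Set.left_mem_Icc.2 (hmono j hj).le)).1 htI.2
      have hsm : StronglyMeasurableAtFilter w (𝓝 t) :=
        ⟨Set.Icc 0 H, hnt, hwc.aestronglyMeasurable measurableSet_Icc⟩
      have hwca : ContinuousAt w t := hvcA.div_const _
      have hFd : HasDerivAt (fun y => u (h j) + ∫ s in (h j)..y, w s) (w t) t :=
        (intervalIntegral.integral_hasDerivAt_right hwint hsm hwca).const_add _
      exact hFd.congr_of_eventuallyEq
        (Filter.eventuallyEq_of_mem hoo fun y hy => huy y (Set.Ioo_subset_Icc_self hy))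
    · -- derivative of v
      have htI : t ∈ Set.Icc (0:ℝ) H := hmemIcc j hj t ht
      set ψ' : ℝ → ℝ := fun s => (cv j * μ ^ 2 - lam) * u s with hψ'def
      have hψψ' : ∀ s ∈ Set.Ioo (h j) (h (j + 1)), ψ s = ψ' s := by
        intro s hs
        rw [hψdef, hψ'def]
        simp only
        rw [hc j hj s hs]
      have hψ'ca : ContinuousAt ψ' t := continuousAt_const.mul hucA
      have hψca : ContinuousAt ψ t :=
        hψ'ca.congr (Filter.eventuallyEq_of_mem hoo hψψ').symm
      have hψ'cont : ContinuousOn ψ' (Set.Ioo (h j) (h (j + 1))) :=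
        continuousOn_const.mul (hucont.mono fun x hx => hmemIcc j hj x hx)
      have hsm : StronglyMeasurableAtFilter ψ (𝓝 t) := by
        refine ⟨Set.Ioo (h j) (h (j + 1)), hoo, ?_⟩
        refine (hψ'cont.aestronglyMeasurable measurableSet_Ioo).congr ?_
        exact (ae_restrict_iff' measurableSet_Ioo).2
          (ae_of_all _ fun s hs => (hψψ' s hs).symm)
      have hψint : IntervalIntegrable ψ volume 0 t := by
        apply hψI.mono_set
        rw [huIcc, Set.uIcc_of_le htI.1]
        exact Set.Icc_subset_Icc_right htI.2
      have hFd : HasDerivAt (fun y => v 0 + ∫ s in (0:ℝ)..y, ψ s) (ψ t) t :=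
        (intervalIntegral.integral_hasDerivAt_right hψint hsm hψca).const_add _
      have := hFd.congr_of_eventuallyEq
        (Filter.eventuallyEq_of_mem hnt fun y hy => hv y hy)
      rwa [hψψ' t ht] at this
  -- the energy is constant on each piece
  have hEconst : ∀ j ≤ N, ∀ x ∈ Set.Icc (h j) (h (j + 1)), ∀ y ∈ Set.Icc (h j) (h (j + 1)),
      x ≤ y → v y ^ 2 + W j * u y ^ 2 = v x ^ 2 + W j * u x ^ 2 := by
    intro j hj x hx y hy hxy
    have hIccsub' : Set.Icc x y ⊆ Set.Icc (0:ℝ) H :=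
      fun z hz => hIccsub j hj ⟨le_trans hx.1 hz.1, le_trans hz.2 hy.2⟩
    have hEcont : ContinuousOn (fun z => v z ^ 2 + W j * u z ^ 2) (Set.Icc x y) :=
      ((hvcont.mono hIccsub').pow 2).add (continuousOn_const.mul ((hucont.mono hIccsub').pow 2))
    have hder : ∀ s ∈ Set.Ioo x y,
        HasDerivWithinAt (fun z => v z ^ 2 + W j * u z ^ 2) ((0:ℝ)) (Set.Ioi s) s := by
      intro s hs
      have hsoo : s ∈ Set.Ioo (h j) (h (j + 1)) :=
        ⟨lt_of_le_of_lt hx.1 hs.1, lt_of_lt_of_le hs.2 hy.2⟩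
      obtain ⟨hud, hvd⟩ := hderiv j hj s hsoo
      have hD : HasDerivAt (fun z => v z ^ 2 + W j * u z ^ 2)
          (2 * v s ^ 1 * ((cv j * μ ^ 2 - lam) * u s) + W j * (2 * u s ^ 1 * (v s / cv j))) s := by
        have h1 : HasDerivAt (fun z => v z ^ 2)
            (((2:ℕ):ℝ) * v s ^ (2 - 1) * ((cv j * μ ^ 2 - lam) * u s)) s := hvd.pow 2
        have h2 : HasDerivAt (fun z => W j * u z ^ 2)
            (W j * (((2:ℕ):ℝ) * u s ^ (2 - 1) * (v s / cv j))) s := (hud.pow 2).const_mul (W j)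
        have h3 : HasDerivAt (fun z => v z ^ 2 + W j * u z ^ 2)
            (((2:ℕ):ℝ) * v s ^ (2 - 1) * ((cv j * μ ^ 2 - lam) * u s)
              + W j * (((2:ℕ):ℝ) * u s ^ (2 - 1) * (v s / cv j))) s := h1.add h2
        simpa using h3
      have hval : 2 * v s ^ 1 * ((cv j * μ ^ 2 - lam) * u s)
          + W j * (2 * u s ^ 1 * (v s / cv j)) = 0 := by
        rw [hW]
        field_simp [hcvne j hj]
        ring
      rw [hval] at hD
      exact hD.hasDerivWithinAt
    have := intervalIntegral.integral_eq_sub_of_hasDeriv_right_of_le hxy hEcont hder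
      intervalIntegrable_const
    simp only [intervalIntegral.integral_const, smul_zero] at this
    linarith [this]
  -- nodal energies and telescoping
  obtain ⟨e, he⟩ : ∃ e : ℕ → ℝ, ∀ j, e j = v (h j) ^ 2 + W j * u (h j) ^ 2 :=
    ⟨_, fun _ => rfl⟩
  have hepos : ∀ j ≤ N, 0 ≤ e j := by
    intro j hj
    rw [he]
    have := hWpos j hj
    positivity
  have hestep : ∀ j, j + 1 ≤ N →
      e (j + 1) ≤ Real.exp (auxK cm cM ε * |cv (j + 1) - cv j|) * e j ∧
      e j ≤ Real.exp (auxK cm cM ε * |cv (j + 1) - cv j|) * e (j + 1) := by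
    intro j hj1
    have hj : j ≤ N := by omega
    have hX1 : 1 ≤ Real.exp (auxK cm cM ε * |cv (j + 1) - cv j|) :=
      Real.one_le_exp (mul_nonneg hK.le (abs_nonneg _))
    have hkey : v (h (j + 1)) ^ 2 + W j * u (h (j + 1)) ^ 2 = e j := by
      rw [he]
      exact hEconst j hj (h j) (Set.left_mem_Icc.2 (hmono j hj).le)
        (h (j + 1)) (Set.right_mem_Icc.2 (hmono j hj).le) (hmono j hj).le
    obtain ⟨hs1, hs2⟩ := hWstep j hj1
    constructor
    · rw [he, ← hkey]
      exact arith_estep hX1 (sq_nonneg _) (sq_nonneg _) (hWpos j hj).le hs1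
    · rw [← hkey, he]
      exact arith_estep hX1 (sq_nonneg _) (sq_nonneg _) (hWpos (j + 1) hj1).le hs2
  have htel : ∀ j ≤ N,
      e j ≤ Real.exp (auxK cm cM ε * V) * e 0 ∧
      e 0 ≤ Real.exp (auxK cm cM ε * V) * e j := by
    have hpartial : ∀ j ≤ N,
        e j ≤ Real.exp (auxK cm cM ε * (∑ i ∈ Finset.range j, |cv (i + 1) - cv i|)) * e 0 ∧
        e 0 ≤ Real.exp (auxK cm cM ε * (∑ i ∈ Finset.range j, |cv (i + 1) - cv i|)) * e j := by
      intro j hj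
      induction j with
      | zero => simp
      | succ n ih =>
        obtain ⟨ih1, ih2⟩ := ih (by omega)
        obtain ⟨hs1, hs2⟩ := hestep n hj
        have hXn : (0:ℝ) < Real.exp (auxK cm cM ε * |cv (n + 1) - cv n|) := Real.exp_pos _
        have hsum : Real.exp (auxK cm cM ε * (∑ i ∈ Finset.range (n + 1), |cv (i + 1) - cv i|))
            = Real.exp (auxK cm cM ε * |cv (n + 1) - cv n|)
              * Real.exp (auxK cm cM ε * (∑ i ∈ Finset.range n, |cv (i + 1) - cv i|)) := by
          rw [← Real.exp_add, Finset.sum_range_succ]; congr 1; ring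
        constructor
        · calc e (n + 1) ≤ Real.exp (auxK cm cM ε * |cv (n + 1) - cv n|) * e n := hs1
          _ ≤ Real.exp (auxK cm cM ε * |cv (n + 1) - cv n|)
              * (Real.exp (auxK cm cM ε * (∑ i ∈ Finset.range n, |cv (i + 1) - cv i|)) * e 0) :=
            mul_le_mul_of_nonneg_left ih1 hXn.le
          _ = _ := by rw [hsum]; ring
        · calc e 0 ≤ Real.exp (auxK cm cM ε * (∑ i ∈ Finset.range n, |cv (i + 1) - cv i|)) * e n := ih2
          _ ≤ Real.exp (auxK cm cM ε * (∑ i ∈ Finset.range n, |cv (i + 1) - cv i|))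
              * (Real.exp (auxK cm cM ε * |cv (n + 1) - cv n|) * e (n + 1)) :=
            mul_le_mul_of_nonneg_left hs2 (Real.exp_pos _).le
          _ = _ := by rw [hsum]; ring
    intro j hj
    have hSle : (∑ i ∈ Finset.range j, |cv (i + 1) - cv i|) ≤ V := by
      refine le_trans ?_ hVsum
      exact Finset.sum_le_sum_of_subset_of_nonneg
        (Finset.range_subset_range.2 hj) (fun i _ _ => abs_nonneg _)
    have hexple : Real.exp (auxK cm cM ε * (∑ i ∈ Finset.range j, |cv (i + 1) - cv i|))
        ≤ Real.exp (auxK cm cM ε * V) :=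
      Real.exp_le_exp.2 (mul_le_mul_of_nonneg_left hSle hK.le)
    obtain ⟨h1, h2⟩ := hpartial j hj
    exact ⟨le_trans h1 (mul_le_mul_of_nonneg_right hexple (hepos 0 (by omega))),
      le_trans h2 (mul_le_mul_of_nonneg_right hexple (hepos j hj))⟩
  have hcomp : ∀ i ≤ N, ∀ j ≤ N, e i ≤ auxk cm cM ε V * e j := by
    intro i hi j hj
    calc e i ≤ Real.exp (auxK cm cM ε * V) * e 0 := (htel i hi).1
    _ ≤ Real.exp (auxK cm cM ε * V) * (Real.exp (auxK cm cM ε * V) * e j) :=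
      mul_le_mul_of_nonneg_left (htel j hj).2 (Real.exp_pos _).le
    _ = auxk cm cM ε V * e j := by unfold auxk; ring
  -- the energy of any point in a piece equals the nodal energy
  have hEpt : ∀ j ≤ N, ∀ y ∈ Set.Icc (h j) (h (j + 1)),
      v y ^ 2 + W j * u y ^ 2 = e j := by
    intro j hj y hy
    rw [he]
    exact hEconst j hj (h j) (Set.left_mem_Icc.2 (hmono j hj).le) y hy hy.1
  -- lower bound on the nodal energy from the normalization
  have hmaxpt : ∃ ys ∈ Set.Icc (0:ℝ) H, 1 / H ≤ u ys ^ 2 := by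
    obtain ⟨ys, hys, hmax⟩ := isCompact_Icc.exists_isMaxOn (Set.nonempty_Icc.2 hH')
      (hucont.pow 2)
    refine ⟨ys, hys, ?_⟩
    have hcon2 : ContinuousOn (fun y => u y ^ 2) (Set.uIcc (0:ℝ) H) := by
      rw [huIcc]; exact hucont.pow 2
    have hint : IntervalIntegrable (fun y => u y ^ 2) volume 0 H :=
      hcon2.intervalIntegrable
    have hle : (1:ℝ) ≤ H * u ys ^ 2 := by
      have := intervalIntegral.integral_mono_on hH' hint intervalIntegrable_const
        (fun x hx => hmax hx)
      rw [hnorm, intervalIntegral.integral_const, smul_eq_mul, sub_zero] at this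
      simpa using this
    rw [div_le_iff₀ hH]
    linarith
  have he0lo : auxA cm cM ε * lam / (auxk cm cM ε V * H) ≤ e 0 := by
    obtain ⟨ys, hys, hys2⟩ := hmaxpt
    obtain ⟨js, hjs, hysj⟩ := hcover ys hys
    have h1 : auxA cm cM ε * lam / H ≤ e js := by
      have h2 := hEpt js hjs ys hysj
      have h3 : auxA cm cM ε * lam * (1 / H) ≤ W js * u ys ^ 2 :=
        mul_le_mul (hWlo js hjs) hys2 (by positivity) (hWpos js hjs).le
      have h4 : 0 ≤ v ys ^ 2 := sq_nonneg _
      calc auxA cm cM ε * lam / H = auxA cm cM ε * lam * (1 / H) := by ring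
      _ ≤ W js * u ys ^ 2 := h3
      _ ≤ v ys ^ 2 + W js * u ys ^ 2 := by linarith
      _ = e js := h2
    have h5 := hcomp js hjs 0 (by omega)
    rw [div_le_iff₀ (by positivity)]
    calc auxA cm cM ε * lam = (auxA cm cM ε * lam / H) * H := by field_simp
    _ ≤ e js * H := mul_le_mul_of_nonneg_right h1 hH'
    _ ≤ auxk cm cM ε V * e 0 * H := mul_le_mul_of_nonneg_right h5 hH'
    _ = e 0 * (auxk cm cM ε V * H) := by ring
  have haepiece : ∀ a b : ℝ, 0 ≤ a → b ≤ H → a ≤ b → ∀ᵐ t ∂volume.restrict (Set.Icc a b),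
      ∃ j ≤ N, t ∈ Set.Ioo (h j) (h (j + 1)) ∧ c t = cv j ∧ g t = v t / cv j := by
    intro a b ha hb hab
    have haeS : ∀ᵐ t : ℝ, t ∉ h '' Set.Iic (N + 1) := by
      rw [ae_iff]
      have he : {t : ℝ | ¬ t ∉ h '' Set.Iic (N + 1)} = h '' Set.Iic (N + 1) := by
        ext t; simp
      rw [he]
      exact ((Set.finite_Iic (N + 1)).image h).measure_zero _
    filter_upwards [ae_restrict_of_ae haeS, ae_restrict_of_ae hae,
      ae_restrict_mem measurableSet_Icc] with t h1 h2 h3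
    have htI : t ∈ Set.Icc (0:ℝ) H := ⟨le_trans ha h3.1, le_trans h3.2 hb⟩
    obtain ⟨j, hj, htj⟩ := hcover t htI
    have hne1 : t ≠ h j := fun he => h1 ⟨j, Set.mem_Iic.2 (by omega), he.symm⟩
    have hne2 : t ≠ h (j + 1) := fun he => h1 ⟨j + 1, Set.mem_Iic.2 (by omega), he.symm⟩
    have htoo : t ∈ Set.Ioo (h j) (h (j + 1)) :=
      ⟨lt_of_le_of_ne htj.1 (Ne.symm hne1), lt_of_le_of_ne htj.2 hne2⟩
    obtain ⟨hc1, hg1⟩ := h2 j hj htoo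
    exact ⟨j, hj, htoo, hc1, hg1⟩
  refine ⟨e 0, hepos 0 (by omega), he0lo, ?_, ?_, ?_, ?_, ?_, ?_⟩
  · -- lower bound on v  (b)
    intro y hy
    obtain ⟨j, hj, hyj⟩ := hcover y hy
    have h1 := hEpt j hj y hyj
    have h2 : e 0 ≤ auxk cm cM ε V * e j := hcomp 0 (by omega) j hj
    have h3 : W j * u y ^ 2 ≤ cM * lam * u y ^ 2 :=
      mul_le_mul_of_nonneg_right (hWhi j hj) (sq_nonneg _)
    have h4 : e 0 / auxk cm cM ε V ≤ e j := by
      rw [div_le_iff₀ hκ0]; linarith [h2]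
    linarith
  · -- upper bound on u  (c)
    intro y hy
    obtain ⟨j, hj, hyj⟩ := hcover y hy
    have h1 := hEpt j hj y hyj
    have h2 : e j ≤ auxk cm cM ε V * e 0 := hcomp j hj 0 (by omega)
    have h3 : auxA cm cM ε * lam * u y ^ 2 ≤ W j * u y ^ 2 :=
      mul_le_mul_of_nonneg_right (hWlo j hj) (sq_nonneg _)
    rw [le_div_iff₀ (by positivity)]
    nlinarith [sq_nonneg (v y)]
  · -- upper bound on v  (d)
    intro y hy
    obtain ⟨j, hj, hyj⟩ := hcover y hy
    have h1 := hEpt j hj y hyj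
    have h2 : e j ≤ auxk cm cM ε V * e 0 := hcomp j hj 0 (by omega)
    nlinarith [mul_nonneg (hWpos j hj).le (sq_nonneg (u y))]

  · -- the integral identity  (e)
    obtain ⟨φ, hφ⟩ : ∃ φ : ℝ → ℝ, ∀ t,
        φ t = v t * g t + (c t * μ ^ 2 - lam) * u t ^ 2 := ⟨_, fun _ => rfl⟩
    have hφeq : (fun t => v t * g t + (c t * μ ^ 2 - lam) * u t ^ 2) = φ := by
      funext t; rw [hφ]
    have hφI : IntervalIntegrable φ volume 0 H := by
      have h1 : IntervalIntegrable (fun t => v t * g t) volume 0 H :=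
        hgI.continuousOn_mul (by rw [huIcc]; exact hvcont)
      have h2 : IntervalIntegrable (fun t => ((c t * μ ^ 2 - lam) * u t) * u t) volume 0 H :=
        hψI.mul_continuousOn (by rw [huIcc]; exact hucont)
      have h3 := h1.add h2
      have h4 : φ = fun t => v t * g t + ((c t * μ ^ 2 - lam) * u t) * u t := by
        funext t; rw [hφ]; ring
      rw [h4]; exact h3
    have hφsub : ∀ x y : ℝ, x ∈ Set.Icc (0:ℝ) H → y ∈ Set.Icc (0:ℝ) H →
        IntervalIntegrable φ volume x y := by
      intro x y hx hy
      apply hφI.mono_set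
      exact Set.uIcc_subset_uIcc (by rw [huIcc]; exact hx : x ∈ Set.uIcc (0:ℝ) H)
        (by rw [huIcc]; exact hy : y ∈ Set.uIcc (0:ℝ) H)
    have hstep : ∀ j ≤ N, ∀ x ∈ Set.Icc (h j) (h (j + 1)), ∀ y ∈ Set.Icc (h j) (h (j + 1)),
        x ≤ y → u y * v y - u x * v x = ∫ t in x..y, φ t := by
      intro j hj x hx y hy hxy
      obtain ⟨φ', hφ'⟩ : ∃ φ' : ℝ → ℝ, ∀ t,
          φ' t = v t / cv j * v t + u t * ((cv j * μ ^ 2 - lam) * u t) := ⟨_, fun _ => rfl⟩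
      have hIccsub' : Set.Icc x y ⊆ Set.Icc (0:ℝ) H :=
        fun z hz => hIccsub j hj ⟨le_trans hx.1 hz.1, le_trans hz.2 hy.2⟩
      have hcontuv : ContinuousOn (fun z => u z * v z) (Set.Icc x y) :=
        (hucont.mono hIccsub').mul (hvcont.mono hIccsub')
      have hder : ∀ s ∈ Set.Ioo x y,
          HasDerivWithinAt (fun z => u z * v z) (φ' s) (Set.Ioi s) s := by
        intro s hs
        have hsoo : s ∈ Set.Ioo (h j) (h (j + 1)) :=
          ⟨lt_of_le_of_lt hx.1 hs.1, lt_of_lt_of_le hs.2 hy.2⟩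
        obtain ⟨hud, hvd⟩ := hderiv j hj s hsoo
        rw [hφ']
        exact (hud.mul hvd).hasDerivWithinAt
      have hφ'I : IntervalIntegrable φ' volume x y := by
        apply ContinuousOn.intervalIntegrable
        rw [Set.uIcc_of_le hxy]
        have hc1 : ContinuousOn
            (fun z => v z / cv j * v z + u z * ((cv j * μ ^ 2 - lam) * u z)) (Set.Icc x y) :=
          (((hvcont.mono hIccsub').div_const _).mul (hvcont.mono hIccsub')).add
            ((hucont.mono hIccsub').mul (continuousOn_const.mul (hucont.mono hIccsub')))
        rw [show φ' = _ from funext hφ']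
        exact hc1
      have h1 := intervalIntegral.integral_eq_sub_of_hasDeriv_right_of_le hxy hcontuv hder hφ'I
      have h2 : (∫ t in x..y, φ' t) = ∫ t in x..y, φ t := by
        apply intervalIntegral.integral_congr_ae
        filter_upwards [hae, hane (h (j + 1))] with s hs hsne hsI
        rw [Set.uIoc_of_le hxy] at hsI
        have hsoo : s ∈ Set.Ioo (h j) (h (j + 1)) :=
          ⟨lt_of_le_of_lt hx.1 hsI.1, lt_of_le_of_ne (le_trans hsI.2 hy.2) hsne⟩
        obtain ⟨hcs, hgs⟩ := hs j hj hsoo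
        rw [hφ', hφ, hcs, hgs]; ring
      rw [← h2, h1]
    have hnodeIcc : ∀ j ≤ N + 1, h j ∈ Set.Icc (0:ℝ) H := by
      intro j hj
      rcases Nat.eq_or_lt_of_le hj with rfl | hlt
      · rw [hN]; exact Set.right_mem_Icc.2 hH'
      · have hjN : j ≤ N := by omega
        exact hIccsub j hjN (Set.left_mem_Icc.2 (hmono j hjN).le)
    have hnode : ∀ j ≤ N + 1, u (h j) * v (h j) - u 0 * v 0 = ∫ t in (0:ℝ)..(h j), φ t := by
      intro j hj
      induction j with
      | zero => rw [h0]; simp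
      | succ n ih =>
        have hn : n ≤ N := by omega
        have h1 := hstep n hn (h n) (Set.left_mem_Icc.2 (hmono n hn).le)
          (h (n + 1)) (Set.right_mem_Icc.2 (hmono n hn).le) (hmono n hn).le
        have h2 := ih (by omega)
        have h3 : (∫ t in (0:ℝ)..(h n), φ t) + ∫ t in (h n)..(h (n + 1)), φ t
            = ∫ t in (0:ℝ)..(h (n + 1)), φ t :=
          intervalIntegral.integral_add_adjacent_intervals
            (hφsub 0 (h n) (Set.left_mem_Icc.2 hH') (hnodeIcc n (by omega)))
            (hφsub (h n) (h (n + 1)) (hnodeIcc n (by omega)) (hnodeIcc (n + 1) hj))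
        linarith
    have hglob : ∀ y ∈ Set.Icc (0:ℝ) H, u y * v y - u 0 * v 0 = ∫ t in (0:ℝ)..y, φ t := by
      intro y hy
      obtain ⟨j, hj, hyj⟩ := hcover y hy
      have h1 := hstep j hj (h j) (Set.left_mem_Icc.2 (hmono j hj).le) y hyj hyj.1
      have h2 := hnode j (by omega)
      have h3 : (∫ t in (0:ℝ)..(h j), φ t) + ∫ t in (h j)..y, φ t
          = ∫ t in (0:ℝ)..y, φ t :=
        intervalIntegral.integral_add_adjacent_intervals
          (hφsub 0 (h j) (Set.left_mem_Icc.2 hH') (hnodeIcc j (by omega)))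
          (hφsub (h j) y (hnodeIcc j (by omega)) hy)
      linarith
    intro a b ha hb hab
    have haI : a ∈ Set.Icc (0:ℝ) H := ⟨ha, le_trans hab hb⟩
    have hbI : b ∈ Set.Icc (0:ℝ) H := ⟨le_trans ha hab, hb⟩
    have hint1 := hglob a haI
    have hint2 := hglob b hbI
    have h3 : (∫ t in (0:ℝ)..a, φ t) + ∫ t in a..b, φ t = ∫ t in (0:ℝ)..b, φ t :=
      intervalIntegral.integral_add_adjacent_intervals
        (hφsub 0 a (Set.left_mem_Icc.2 hH') haI) (hφsub a b haI hbI)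
    rw [hφeq]
    linarith
  · -- (f)
    intro a b ha hb hab
    have hsubI : Set.uIcc a b ⊆ Set.uIcc (0:ℝ) H :=
      Set.uIcc_subset_uIcc (by rw [huIcc]; exact ⟨ha, le_trans hab hb⟩)
        (by rw [huIcc]; exact ⟨le_trans ha hab, hb⟩)
    have hsubI' : Set.uIcc a b ⊆ Set.Icc (0:ℝ) H := by rw [← huIcc]; exact hsubI
    have hvgI : IntervalIntegrable (fun t => v t * g t) volume a b :=
      (hgI.continuousOn_mul (by rw [huIcc]; exact hvcont)).mono_set hsubI
    have hv2I : IntervalIntegrable (fun t => v t ^ 2 / cM) volume a b :=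
      ContinuousOn.intervalIntegrable (((hvcont.mono hsubI').pow 2).div_const _)
    have hmono2 := intervalIntegral.integral_mono_ae_restrict hab hv2I hvgI ?_
    · rwa [intervalIntegral.integral_div] at hmono2
    · filter_upwards [haepiece a b ha hb hab] with t ht
      obtain ⟨j, hj, htoo, hc1, hg1⟩ := ht
      have hcvpos : 0 < cv j := lt_of_lt_of_le hcm (hcv j hj).1
      have h5 : v t ^ 2 / cM ≤ v t ^ 2 / cv j :=
        div_le_div_of_nonneg_left (sq_nonneg _) hcvpos (hcv j hj).2
      have h6 : v t ^ 2 / cv j = v t * (v t / cv j) := by ring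
      rw [hg1]
      calc v t ^ 2 / cM ≤ v t ^ 2 / cv j := h5
      _ = v t * (v t / cv j) := h6
  · -- (g)
    intro a b ha hb hab
    have hsubI : Set.uIcc a b ⊆ Set.uIcc (0:ℝ) H :=
      Set.uIcc_subset_uIcc (by rw [huIcc]; exact ⟨ha, le_trans hab hb⟩)
        (by rw [huIcc]; exact ⟨le_trans ha hab, hb⟩)
    have hsubI' : Set.uIcc a b ⊆ Set.Icc (0:ℝ) H := by rw [← huIcc]; exact hsubI
    have hu2I : IntervalIntegrable (fun t => -lam * u t ^ 2) volume a b :=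
      ContinuousOn.intervalIntegrable (continuousOn_const.mul ((hucont.mono hsubI').pow 2))
    have hrhsI : IntervalIntegrable (fun t => (c t * μ ^ 2 - lam) * u t ^ 2) volume a b := by
      have h2 : IntervalIntegrable (fun t => ((c t * μ ^ 2 - lam) * u t) * u t) volume 0 H :=
        hψI.mul_continuousOn (by rw [huIcc]; exact hucont)
      have h3 := h2.mono_set hsubI
      have h4 : (fun t => (c t * μ ^ 2 - lam) * u t ^ 2)
          = fun t => ((c t * μ ^ 2 - lam) * u t) * u t := by
        funext t; ring
      rw [h4]; exact h3
    have hmono2 := intervalIntegral.integral_mono_ae_restrict hab hu2I hrhsI ?_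
    · rwa [intervalIntegral.integral_const_mul] at hmono2
    · filter_upwards [haepiece a b ha hb hab] with t ht
      obtain ⟨j, hj, htoo, hc1, hg1⟩ := ht
      have hcvpos : 0 < cv j := lt_of_lt_of_le hcm (hcv j hj).1
      rw [hc1]
      linarith [mul_nonneg (mul_nonneg hcvpos.le (sq_nonneg μ)) (sq_nonneg (u t))]





end Main

section Final

lemma sol_cont {H : ℝ} {c : ℝ → ℝ} {μ lam : ℝ} {u v g : ℝ → ℝ} (hH : 0 ≤ H)
    (hsol : IsReducedSolutionOn 0 H c μ lam u v g) :
    ContinuousOn u (Set.Icc 0 H) ∧ ContinuousOn v (Set.Icc 0 H) := by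
  obtain ⟨hgI, hg2I, hu, hvg, hψI, hv⟩ := hsol
  have huIcc : Set.uIcc (0:ℝ) H = Set.Icc (0:ℝ) H := Set.uIcc_of_le hH
  constructor
  · have h1 : ContinuousOn (fun b => ∫ t in (0:ℝ)..b, g t) (Set.Icc (0:ℝ) H) := by
      rw [← huIcc]
      exact intervalIntegral.continuousOn_primitive_interval' hgI
        (by rw [huIcc]; exact Set.left_mem_Icc.2 hH)
    exact (continuousOn_const.add h1).congr fun y hy => hu y hy
  · have h1 : ContinuousOn (fun b => ∫ t in (0:ℝ)..b, (c t * μ ^ 2 - lam) * u t)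
        (Set.Icc (0:ℝ) H) := by
      rw [← huIcc]
      exact intervalIntegral.continuousOn_primitive_interval' hψI
        (by rw [huIcc]; exact Set.left_mem_Icc.2 hH)
    exact (continuousOn_const.add h1).congr fun y hy => hv y hy

lemma absuv {X Y k e0 A lam : ℝ} (hX : X ^ 2 ≤ k * e0 / (A * lam)) (hY : Y ^ 2 ≤ k * e0)
    (hAl : 0 < A * lam) (hk0 : 0 < k) (he0 : 0 ≤ e0) :
    |X * Y| ≤ k * e0 / Real.sqrt (A * lam) := by
  have hke : 0 ≤ k * e0 := mul_nonneg hk0.le he0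
  have hsq : 0 < Real.sqrt (A * lam) := Real.sqrt_pos.2 hAl
  have h1 : (X * Y) ^ 2 ≤ k * e0 / (A * lam) * (k * e0) := by
    rw [mul_pow]
    exact mul_le_mul hX hY (sq_nonneg _) (div_nonneg hke hAl.le)
  have hB0 : 0 ≤ k * e0 / Real.sqrt (A * lam) := div_nonneg hke hsq.le
  have hB2 : (k * e0 / Real.sqrt (A * lam)) ^ 2 = k * e0 / (A * lam) * (k * e0) := by
    rw [div_pow, Real.sq_sqrt hAl.le]
    field_simp
  calc |X * Y| = Real.sqrt ((X * Y) ^ 2) := (Real.sqrt_sq_eq_abs _).symm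
  _ ≤ Real.sqrt ((k * e0 / Real.sqrt (A * lam)) ^ 2) := Real.sqrt_le_sqrt (by rw [hB2]; exact h1)
  _ = k * e0 / Real.sqrt (A * lam) := Real.sqrt_sq hB0

lemma part1_final {A k H cM cMε μ₁ lam e0 X Y : ℝ}
    (hA : 0 < A) (hk : 1 ≤ k) (hH : 0 < H) (hcM : 0 < cM) (hcMε : 0 < cMε)
    (hμ₁ : 0 < μ₁) (hlam1 : cMε * μ₁ ^ 2 ≤ lam) (hlam0 : 0 < lam)
    (he0 : A * lam / (k * H) ≤ e0)
    (h1 : e0 / k - cM * lam * X ≤ Y) (hX : 0 ≤ X) (hY : 0 ≤ Y) :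
    min (A / (2 * k ^ 2 * H * cM)) (A * cMε * μ₁ ^ 2 / (2 * k ^ 2 * H)) ≤ X + Y := by
  have hk0 : 0 < k := lt_of_lt_of_le one_pos hk
  have hD : (0:ℝ) < 2 * k ^ 2 * H * cM :=
    mul_pos (mul_pos (mul_pos two_pos (pow_pos hk0 2)) hH) hcM
  have hD2 : (0:ℝ) < 2 * k ^ 2 * H :=
    mul_pos (mul_pos two_pos (pow_pos hk0 2)) hH
  by_cases hcase : A / (2 * k ^ 2 * H * cM) ≤ X
  · exact le_trans (min_le_left _ _) (by linarith)
  · push_neg at hcase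
    have h2 : cM * lam * X ≤ cM * lam * (A / (2 * k ^ 2 * H * cM)) :=
      mul_le_mul_of_nonneg_left hcase.le (by positivity)
    have hq1 : cM * lam * (A / (2 * k ^ 2 * H * cM)) = A * lam / (2 * k ^ 2 * H) := by
      field_simp
    have hq2 : A * lam / (2 * k ^ 2 * H) + A * lam / (2 * k ^ 2 * H)
        = A * lam / (k ^ 2 * H) := by
      field_simp
      ring
    have hL : A * lam / (k ^ 2 * H) ≤ e0 / k := by
      rw [div_le_div_iff₀ (by nlinarith [pow_pos hk0 2]) hk0]
      have h3 := (div_le_iff₀ (mul_pos hk0 hH)).1 he0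
      calc A * lam * k ≤ e0 * (k * H) * k := by nlinarith
      _ = e0 * (k ^ 2 * H) := by ring
    have hq3 : A * cMε * μ₁ ^ 2 / (2 * k ^ 2 * H) ≤ A * lam / (2 * k ^ 2 * H) := by
      rw [div_le_div_iff₀ hD2 hD2]
      have h4 : A * (cMε * μ₁ ^ 2) ≤ A * lam := mul_le_mul_of_nonneg_left hlam1 hA.le
      nlinarith
    refine le_trans (min_le_right _ _) ?_
    linarith

lemma part2_final {A k cM H δ lam e0 I Vv G J Fa Fb : ℝ}
    (hA : 0 < A) (hk : 1 ≤ k) (hH : 0 < H) (hcM : 0 < cM) (hδ : 0 < δ)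
    (hlam0 : 0 < lam) (he0n : 0 ≤ e0)
    (he0lo : A * lam / (k * H) ≤ e0)
    (hS1 : δ * (e0 / k) - cM * lam * I ≤ Vv)
    (hid : Fb - Fa = G + J)
    (hS3 : Vv / cM ≤ G)
    (hS4 : -lam * I ≤ J)
    (hFa : |Fa| ≤ k * e0 / Real.sqrt (A * lam))
    (hFb : |Fb| ≤ k * e0 / Real.sqrt (A * lam))
    (hlamb : (4 * cM * k ^ 2 / δ) ^ 2 / A < lam)
    (hI0 : 0 ≤ I) :
    A * δ / (4 * k ^ 2 * cM * H) ≤ I := by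
  have hk0 : 0 < k := lt_of_lt_of_le one_pos hk
  have hAl : 0 < A * lam := mul_pos hA hlam0
  have hsq : 0 < Real.sqrt (A * lam) := Real.sqrt_pos.2 hAl
  have hke : 0 ≤ k * e0 := mul_nonneg hk0.le he0n
  obtain ⟨B, hB⟩ : ∃ B : ℝ, B = k * e0 / Real.sqrt (A * lam) := ⟨_, rfl⟩
  rw [← hB] at hFa hFb
  have hB0 : 0 ≤ B := by rw [hB]; exact div_nonneg hke hsq.le
  have h1 : G ≤ 2 * B + lam * I := by
    have ha := (abs_le.1 hFa).1
    have hb := (abs_le.1 hFb).2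
    linarith [hS4, hid]
  have h2 : Vv ≤ (2 * B + lam * I) * cM := (div_le_iff₀ hcM).1 (le_trans hS3 h1)
  have h3 : δ * (e0 / k) ≤ 2 * cM * B + 2 * cM * lam * I := by linarith
  have hq : 0 < 4 * cM * k ^ 2 :=
    mul_pos (mul_pos (by norm_num) hcM) (pow_pos hk0 2)
  have hqd : 0 < 4 * cM * k ^ 2 / δ := div_pos hq hδ
  have hsqrt : 4 * cM * k ^ 2 / δ ≤ Real.sqrt (A * lam) := by
    have h4 : (4 * cM * k ^ 2 / δ) ^ 2 ≤ A * lam := by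
      have h5 := (div_lt_iff₀ hA).1 hlamb
      linarith
    calc 4 * cM * k ^ 2 / δ = Real.sqrt ((4 * cM * k ^ 2 / δ) ^ 2) :=
      (Real.sqrt_sq hqd.le).symm
    _ ≤ Real.sqrt (A * lam) := Real.sqrt_le_sqrt h4
  have h5 : B ≤ e0 * δ / (4 * cM * k) := by
    have h6 : k * e0 / Real.sqrt (A * lam) ≤ k * e0 / (4 * cM * k ^ 2 / δ) :=
      div_le_div_of_nonneg_left hke hqd hsqrt
    have h7 : k * e0 / (4 * cM * k ^ 2 / δ) = e0 * δ / (4 * cM * k) := by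
      field_simp
    rw [hB, ← h7]
    exact h6
  have h8 : δ * (e0 / k) = e0 * δ / k := by ring
  have h9 : 2 * cM * (e0 * δ / (4 * cM * k)) = e0 * δ / (2 * k) := by
    field_simp
    ring
  have h10 : e0 * δ / (2 * k) + e0 * δ / (2 * k) = e0 * δ / k := by
    field_simp
    ring
  have h11 : e0 * δ / (2 * k) ≤ 2 * cM * lam * I := by
    have h12 : 2 * cM * B ≤ 2 * cM * (e0 * δ / (4 * cM * k)) :=
      mul_le_mul_of_nonneg_left h5 (by linarith)
    linarith
  have h12 : A * lam * δ / (k * H) ≤ e0 * δ := by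
    have h13 := mul_le_mul_of_nonneg_right he0lo hδ.le
    calc A * lam * δ / (k * H) = A * lam / (k * H) * δ := by ring
    _ ≤ e0 * δ := h13
  have h13 : e0 * δ ≤ 4 * k * cM * lam * I := by
    have h14 := (div_le_iff₀ (by linarith : (0:ℝ) < 2 * k)).1 h11
    linarith
  have h14 : A * lam * δ ≤ 4 * k * cM * lam * I * (k * H) :=
    (div_le_iff₀ (mul_pos hk0 hH)).1 (le_trans h12 h13)
  rw [div_le_iff₀ (mul_pos (mul_pos (mul_pos (by norm_num : (0:ℝ) < 4) (pow_pos hk0 2)) hcM) hH)]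
  have h16 : A * δ * lam ≤ I * (4 * k ^ 2 * cM * H) * lam := by linarith
  exact le_of_mul_le_mul_right h16 hlam0

end Final

/-- minimal amplitude and non-concentration for piecewise constant
coefficients, with constants depending only on `ε, cm, cM, V, H, μ₁` (and `δ = b - a`
for the second part), but not on the number of pieces or the partition. -/
theorem stmt15 (cm cM : ℝ) (hcm : 0 < cm) (hcmM : cm < cM)
    (H ε μ₁ V : ℝ) (hH : 0 < H) (hε : 0 < ε) (hμ₁ : 0 < μ₁) (hV : 0 ≤ V) :
    (∃ r > (0:ℝ),
      ∀ (N : ℕ) (h : ℕ → ℝ) (cv : ℕ → ℝ) (c : ℝ → ℝ),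
        h 0 = 0 → h (N + 1) = H →
        (∀ j ≤ N, h j < h (j + 1)) →
        (∀ j ≤ N, cv j ∈ Set.Icc cm cM) →
        (∀ j ≤ N, ∀ y ∈ Set.Ioo (h j) (h (j + 1)), c y = cv j) →
        (∑ j ∈ Finset.range N, |cv (j + 1) - cv j|) ≤ V →
        ∀ μ : ℝ, μ₁ ≤ μ → ∀ lam : ℝ, (cM + ε) * μ ^ 2 ≤ lam →
        ∀ u v g : ℝ → ℝ, IsReducedSolutionOn 0 H c μ lam u v g →
        u 0 = 0 → u H = 0 → (∫ y in (0:ℝ)..H, u y ^ 2) = 1 →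
        ∀ y ∈ Set.Icc (0 : ℝ) H, r ^ 2 ≤ u y ^ 2 + v y ^ 2) ∧
    (∀ δ > (0:ℝ), ∃ d > (0:ℝ), ∃ lam₀ > (0:ℝ),
      ∀ (N : ℕ) (h : ℕ → ℝ) (cv : ℕ → ℝ) (c : ℝ → ℝ),
        h 0 = 0 → h (N + 1) = H →
        (∀ j ≤ N, h j < h (j + 1)) →
        (∀ j ≤ N, cv j ∈ Set.Icc cm cM) →
        (∀ j ≤ N, ∀ y ∈ Set.Ioo (h j) (h (j + 1)), c y = cv j) →
        (∑ j ∈ Finset.range N, |cv (j + 1) - cv j|) ≤ V →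
        ∀ μ : ℝ, μ₁ ≤ μ → ∀ lam : ℝ, (cM + ε) * μ ^ 2 ≤ lam → lam₀ < lam →
        ∀ u v g : ℝ → ℝ, IsReducedSolutionOn 0 H c μ lam u v g →
        u 0 = 0 → u H = 0 → (∫ y in (0:ℝ)..H, u y ^ 2) = 1 →
        ∀ a b : ℝ, 0 ≤ a → b ≤ H → b - a = δ →
        d ≤ ∫ y in a..b, u y ^ 2) := by
  obtain ⟨hα, hK, -⟩ := arith_pos hcm hcmM hε
  have hcM0 : 0 < cM := hcm.trans hcmM
  have hcMε : 0 < cM + ε := by linarith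
  have hκ1 : 1 ≤ auxk cm cM ε V := by
    unfold auxk
    nlinarith [Real.one_le_exp (mul_nonneg hK.le hV)]
  have hκ0 : 0 < auxk cm cM ε V := lt_of_lt_of_le one_pos hκ1
  constructor
  · -- part 1 : minimal amplitude
    have hR2pos : 0 < min (auxA cm cM ε / (2 * auxk cm cM ε V ^ 2 * H * cM))
        (auxA cm cM ε * (cM + ε) * μ₁ ^ 2 / (2 * auxk cm cM ε V ^ 2 * H)) := by
      apply lt_min
      · exact div_pos hα (mul_pos (mul_pos (mul_pos two_pos (pow_pos hκ0 2)) hH) hcM0)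
      · exact div_pos (mul_pos (mul_pos hα hcMε) (pow_pos hμ₁ 2))
          (mul_pos (mul_pos two_pos (pow_pos hκ0 2)) hH)
    refine ⟨Real.sqrt (min (auxA cm cM ε / (2 * auxk cm cM ε V ^ 2 * H * cM))
      (auxA cm cM ε * (cM + ε) * μ₁ ^ 2 / (2 * auxk cm cM ε V ^ 2 * H))),
      Real.sqrt_pos.2 hR2pos, ?_⟩
    intro N h cv c h0 hN hmono hcv hc hVsum μ hμ lam hlam u v g hsol hu0 huH hnorm y hy
    obtain ⟨e0, he0n, he0lo, hb2, hc2, hd2, hid, hf2, hg2⟩ :=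
      aux_main hcm hcmM hH hε hμ₁ hV h0 hN hmono hcv hc hVsum hμ hlam hsol hnorm
    rw [Real.sq_sqrt hR2pos.le]
    have hμ0 : 0 < μ := lt_of_lt_of_le hμ₁ hμ
    have hlam0 : 0 < lam := lt_of_lt_of_le (by positivity) hlam
    have hlam1 : (cM + ε) * μ₁ ^ 2 ≤ lam := by
      have h2 : μ₁ ^ 2 ≤ μ ^ 2 := pow_le_pow_left₀ hμ₁.le hμ 2
      nlinarith
    -- reduce to the arithmetic lemma; note auxk = (exp)^2 so k^2 here is auxk^2
    have key := part1_final (k := auxk cm cM ε V) hα hκ1 hH hcM0 hcMε hμ₁ hlam1 hlam0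
      he0lo (hb2 y hy) (sq_nonneg (u y)) (sq_nonneg (v y))
    exact key
  · -- part 2 : non-concentration
    intro δ hδ
    refine ⟨auxA cm cM ε * δ / (4 * auxk cm cM ε V ^ 2 * cM * H), ?_,
      max ((cM + ε) * μ₁ ^ 2) ((4 * cM * auxk cm cM ε V ^ 2 / δ) ^ 2 / auxA cm cM ε), ?_, ?_⟩
    · exact div_pos (mul_pos hα hδ)
        (mul_pos (mul_pos (mul_pos (by norm_num) (pow_pos hκ0 2)) hcM0) hH)
    · exact lt_of_lt_of_le (by positivity) (le_max_left _ _)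
    intro N h cv c h0 hN hmono hcv hc hVsum μ hμ lam hlam hlam₀ u v g hsol hu0 huH hnorm
      a b ha hb hδab
    obtain ⟨e0, he0n, he0lo, hb2, hc2, hd2, hid, hf2, hg2⟩ :=
      aux_main hcm hcmM hH hε hμ₁ hV h0 hN hmono hcv hc hVsum hμ hlam hsol hnorm
    have hμ0 : 0 < μ := lt_of_lt_of_le hμ₁ hμ
    have hlam0 : 0 < lam := lt_of_lt_of_le (by positivity) hlam
    have hab : a ≤ b := by linarith
    have haI : a ∈ Set.Icc (0:ℝ) H := ⟨ha, le_trans hab hb⟩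
    have hbI : b ∈ Set.Icc (0:ℝ) H := ⟨le_trans ha hab, hb⟩
    obtain ⟨hucont, hvcont⟩ := sol_cont hH.le hsol
    have hsubI' : Set.uIcc a b ⊆ Set.Icc (0:ℝ) H := by
      rw [Set.uIcc_of_le hab]
      exact fun z hz => ⟨le_trans ha hz.1, le_trans hz.2 hb⟩
    have hu2I : IntervalIntegrable (fun y => u y ^ 2) volume a b :=
      ContinuousOn.intervalIntegrable ((hucont.mono hsubI').pow 2)
    have hv2I : IntervalIntegrable (fun y => v y ^ 2) volume a b :=
      ContinuousOn.intervalIntegrable ((hvcont.mono hsubI').pow 2)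
    -- S1
    have hlhsI : IntervalIntegrable
        (fun y => e0 / auxk cm cM ε V - cM * lam * u y ^ 2) volume a b :=
      intervalIntegrable_const.sub (hu2I.const_mul _)
    have hS1 := intervalIntegral.integral_mono_on hab hlhsI hv2I
      (fun y hy => hb2 y ⟨le_trans ha hy.1, le_trans hy.2 hb⟩)
    rw [intervalIntegral.integral_sub intervalIntegrable_const (hu2I.const_mul _),
      intervalIntegral.integral_const, intervalIntegral.integral_const_mul, smul_eq_mul,
      hδab] at hS1
    -- identity split
    have huIcc : Set.uIcc (0:ℝ) H = Set.Icc (0:ℝ) H := Set.uIcc_of_le hH.le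
    have hsubu : Set.uIcc a b ⊆ Set.uIcc (0:ℝ) H := by rw [huIcc]; exact hsubI'
    have hvgI : IntervalIntegrable (fun t => v t * g t) volume a b :=
      (hsol.1.continuousOn_mul (by rw [huIcc]; exact hvcont)).mono_set hsubu
    have hJI : IntervalIntegrable (fun t => (c t * μ ^ 2 - lam) * u t ^ 2) volume a b := by
      have h2 : IntervalIntegrable (fun t => ((c t * μ ^ 2 - lam) * u t) * u t) volume 0 H :=
        hsol.2.2.2.2.1.mul_continuousOn (by rw [huIcc]; exact hucont)
      have h3 := h2.mono_set hsubu
      have h4 : (fun t => (c t * μ ^ 2 - lam) * u t ^ 2)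
          = fun t => ((c t * μ ^ 2 - lam) * u t) * u t := by
        funext t; ring
      rw [h4]; exact h3
    have hid' := hid a b ha hb hab
    rw [intervalIntegral.integral_add hvgI hJI] at hid'
    -- F bounds
    have hFa := absuv (hc2 a haI) (hd2 a haI) (mul_pos hα hlam0) hκ0 he0n
    have hFb := absuv (hc2 b hbI) (hd2 b hbI) (mul_pos hα hlam0) hκ0 he0n
    have hI0 : (0:ℝ) ≤ ∫ y in a..b, u y ^ 2 :=
      intervalIntegral.integral_nonneg hab (fun y _ => sq_nonneg _)
    have hlamb : (4 * cM * auxk cm cM ε V ^ 2 / δ) ^ 2 / auxA cm cM ε < lam :=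
      lt_of_le_of_lt (le_max_right _ _) hlam₀
    exact part2_final hα hκ1 hH hcM0 hδ hlam0 he0n he0lo hS1 hid'
      (hf2 a b ha hb hab) (hg2 a b ha hb hab) hFa hFb hlamb hI0
end
end

section
/- (Comparability of arch amplitudes for piecewise constant coefficients.) Let c be piecewise constant as follows: 0 = h_{−1} < h₀ < ⋯ < h_N = H and c(y) = c_{j+1} ∈ [c_m, c_M] for y ∈ (h_j, h_{j+1}), j = −1,…,N−1, with total variation V := Σ_{j=0}^{N−1}|c_{j+1} − c_j|. Fix ε > 0, μ > 0 and λ ≥ (c_M + ε)μ², and let u be a nontrivial Dirichlet solution of the reduced problem, so that on each piece u(y) = β_j sin( μ√(p_{j+1}/c_{j+1}) (y − γ_j) ) for y ∈ (h_j, h_{j+1}), where p_{j+1} := λ/μ² − c_{j+1} and β_j, γ_j are constants. Then β_j ≠ 0 for every j, and with κ := (1/c_m)·max(1, (c_M − ε)/ε) one has β_{−1}² e^{−κV} ≤ β_q² ≤ β_{−1}² e^{κV} for every q ∈ {0,1,…,N−1}; in particular the ratio of any two of the β_j² is at most e^{2κV}. -/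
open MeasureTheory Set Filter Topology

noncomputable section

lemma aux_ext {f : ℝ → ℝ} {s : Set ℝ} {a b K : ℝ} (hab : a < b)
    (hsub : Set.Icc a b ⊆ s) (hf : ContinuousOn f s)
    (hconst : ∀ y ∈ Set.Ioo a b, f y = K) : ∀ y ∈ Set.Icc a b, f y = K := by
  intro y hy
  have hIoo : Set.Ioo a b ⊆ s := fun z hz => hsub (Set.Ioo_subset_Icc_self hz)
  have h1 : ContinuousWithinAt f (Set.Ioo a b) y := (hf y (hsub hy)).mono hIoo
  have h2 : y ∈ closure (Set.Ioo a b) := by rw [closure_Ioo hab.ne]; exact hy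
  have hne : (𝓝[Set.Ioo a b] y).NeBot := mem_closure_iff_nhdsWithin_neBot.mp h2
  have h3 : Tendsto f (𝓝[Set.Ioo a b] y) (𝓝 K) := by
    refine tendsto_const_nhds.congr' ?_
    filter_upwards [eventually_mem_nhdsWithin] with z hz using (hconst z hz).symm
  exact tendsto_nhds_unique h1 h3

lemma aux_ratio {A B P Q R : ℝ} (hA : 0 ≤ A) (hB : 0 ≤ B) (hP : 0 < P) (hQ : 0 < Q)
    (hR1 : 1 ≤ R) (hR2 : P / Q ≤ R) : A + B / Q ≤ R * (A + B / P) := by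
  have h1 : A ≤ R * A := le_mul_of_one_le_left hA hR1
  have h2 : B / Q ≤ R * (B / P) := by
    have hBQ : B / Q = (P / Q) * (B / P) := by field_simp
    rw [hBQ]
    exact mul_le_mul_of_nonneg_right hR2 (div_nonneg hB hP.le)
  linarith

lemma aux_logf {cm cM ε L : ℝ} (hcm : 0 < cm) (hε : 0 < ε) (hL : cM + ε ≤ L)
    {x y : ℝ} (hx : x ∈ Set.Icc cm cM) (hy : y ∈ Set.Icc cm cM) :
    x * (L - x) / (y * (L - y)) ≤ Real.exp ((1 / cm * max 1 ((cM - ε) / ε)) * |x - y|) := by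
  set κ := 1 / cm * max 1 ((cM - ε) / ε) with hκdef
  have hκ1 : 1 / cm ≤ κ := by
    calc 1 / cm = 1 / cm * 1 := (mul_one _).symm
    _ ≤ κ := by rw [hκdef]; exact mul_le_mul_of_nonneg_left (le_max_left _ _) (by positivity)
  have hκpos : 0 < κ := lt_of_lt_of_le (by positivity) hκ1
  have hpos : ∀ t ∈ Set.Icc cm cM, 0 < t ∧ 0 < L - t := by
    intro t ht
    exact ⟨lt_of_lt_of_le hcm ht.1, by nlinarith [ht.2]⟩
  set φ : ℝ → ℝ := fun t => Real.log t + Real.log (L - t) with hφ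
  have hderiv : ∀ t ∈ Set.Icc cm cM,
      HasDerivWithinAt (fun t => φ t) (t⁻¹ - (L - t)⁻¹) (Set.Icc cm cM) t := by
    intro t ht
    obtain ⟨ht1, ht2⟩ := hpos t ht
    have h1 : HasDerivAt Real.log t⁻¹ t := Real.hasDerivAt_log ht1.ne'
    have h2 : HasDerivAt (fun s => Real.log (L - s)) (-(L - t)⁻¹) t := by
      have hb : HasDerivAt (fun s : ℝ => L - s) (-1) t := by
        simpa using (hasDerivAt_id t).const_sub L
      have := (Real.hasDerivAt_log ht2.ne').comp t hb
      exact this.congr_deriv (by ring)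
    have := h1.add h2
    exact this.hasDerivWithinAt.congr_deriv (by ring)
  have hbound : ∀ t ∈ Set.Icc cm cM, ‖t⁻¹ - (L - t)⁻¹‖ ≤ κ := by
    intro t ht
    obtain ⟨ht1, ht2⟩ := hpos t ht
    rw [Real.norm_eq_abs, abs_le]
    constructor
    · rw [neg_le, neg_sub]
      by_cases hcmp : (L - t)⁻¹ ≤ t⁻¹
      · linarith
      · push_neg at hcmp
        have h2tL : 0 < 2 * t - L := by
          have := (inv_lt_inv₀ ht1 ht2).mp hcmp
          linarith
        have heq : (L - t)⁻¹ - t⁻¹ = (2 * t - L) / (t * (L - t)) := by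
          field_simp; ring
        have hnum : 2 * t - L ≤ cM - ε := by
          have := ht.2; linarith
        have hden : cm * ε ≤ t * (L - t) := by
          have h1 : ε ≤ L - t := by have := ht.2; linarith
          have := ht.1
          nlinarith
        rw [heq]
        calc (2 * t - L) / (t * (L - t)) ≤ (cM - ε) / (cm * ε) :=
              div_le_div₀ (by linarith) hnum (by positivity) hden
          _ = 1 / cm * ((cM - ε) / ε) := by field_simp
          _ ≤ κ := by rw [hκdef]; exact mul_le_mul_of_nonneg_left (le_max_right _ _) (by positivity)
    · calc t⁻¹ - (L - t)⁻¹ ≤ t⁻¹ := by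
            have : 0 < (L - t)⁻¹ := by positivity
            linarith
        _ ≤ 1 / cm := by rw [one_div]; exact inv_anti₀ hcm ht.1
        _ ≤ κ := hκ1
  have hmvt := (convex_Icc cm cM).norm_image_sub_le_of_norm_hasDerivWithin_le
    hderiv hbound hy hx
  rw [Real.norm_eq_abs, Real.norm_eq_abs] at hmvt
  have hxx := hpos x hx
  have hyy := hpos y hy
  have hexp : x * (L - x) / (y * (L - y)) = Real.exp (φ x - φ y) := by
    rw [Real.exp_sub, hφ]
    simp only
    rw [Real.exp_add, Real.exp_add, Real.exp_log hxx.1, Real.exp_log hxx.2,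
      Real.exp_log hyy.1, Real.exp_log hyy.2]
  rw [hexp]
  apply Real.exp_le_exp.mpr
  calc φ x - φ y ≤ |φ x - φ y| := le_abs_self _
    _ ≤ κ * |x - y| := hmvt

/-- comparability of the arch amplitudes `β_j` for a piecewise constant
coefficient, with `κ = (1/cm)·max(1, (cM - ε)/ε)` and `V` the total variation. -/
theorem stmt16 (cm cM H : ℝ) (hcm : 0 < cm) (hcmM : cm < cM) (hH : 0 < H)
    (ε μ lam : ℝ) (hε : 0 < ε) (hμ : 0 < μ) (hlam : (cM + ε) * μ ^ 2 ≤ lam)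
    (N : ℕ) (h : ℕ → ℝ) (cv : ℕ → ℝ) (c : ℝ → ℝ)
    (hh0 : h 0 = 0) (hhN : h (N + 1) = H)
    (hmono : ∀ j ≤ N, h j < h (j + 1))
    (hcv : ∀ j ≤ N, cv j ∈ Set.Icc cm cM)
    (hstep : ∀ j ≤ N, ∀ y ∈ Set.Ioo (h j) (h (j + 1)), c y = cv j)
    (u v g : ℝ → ℝ) (hsol : IsReducedSolutionOn 0 H c μ lam u v g)
    (hu0 : u 0 = 0) (huH : u H = 0) (hnt : ∃ y ∈ Set.Icc (0 : ℝ) H, u y ≠ 0)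
    (β γ : ℕ → ℝ)
    (hrep : ∀ j ≤ N, ∀ y ∈ Set.Ioo (h j) (h (j + 1)),
      u y = β j * Real.sin (μ * Real.sqrt ((lam / μ ^ 2 - cv j) / cv j) * (y - γ j))) :
    (∀ j ≤ N, β j ≠ 0) ∧
    (∀ q ≤ N,
      β 0 ^ 2 * Real.exp (-(1 / cm * max 1 ((cM - ε) / ε)) *
          (∑ j ∈ Finset.range N, |cv (j + 1) - cv j|)) ≤ β q ^ 2 ∧
      β q ^ 2 ≤ β 0 ^ 2 * Real.exp ((1 / cm * max 1 ((cM - ε) / ε)) *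
          (∑ j ∈ Finset.range N, |cv (j + 1) - cv j|))) ∧
    (∀ q ≤ N, ∀ q' ≤ N,
      β q ^ 2 ≤ β q' ^ 2 * Real.exp (2 * (1 / cm * max 1 ((cM - ε) / ε)) *
          (∑ j ∈ Finset.range N, |cv (j + 1) - cv j|))) := by
  obtain ⟨hg_int, hg2_int, hu_rep, hvg, hF_int, hv_rep⟩ := hsol
  set κ := 1 / cm * max 1 ((cM - ε) / ε) with hκdef
  set S := ∑ j ∈ Finset.range N, |cv (j + 1) - cv j| with hSdef
  set L := lam / μ ^ 2 with hLdef
  have hμ2 : (0:ℝ) < μ ^ 2 := by positivity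
  have hκpos : 0 < κ := by
    have h1 : 1 / cm * 1 ≤ κ := by
      rw [hκdef]; exact mul_le_mul_of_nonneg_left (le_max_left _ _) (by positivity)
    calc (0:ℝ) < 1 / cm * 1 := by positivity
      _ ≤ κ := h1
  have hLge : cM + ε ≤ L := by rw [hLdef]; exact (le_div_iff₀ hμ2).mpr hlam
  clear_value κ S L
  -- monotonicity of the partition points
  have hmono' : ∀ k ≤ N + 1, ∀ j ≤ k, h j ≤ h k := by
    intro k
    induction k with
    | zero => intro _ j hj; rw [Nat.le_zero.mp hj]
    | succ k ih =>
      intro hk j hj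
      rcases Nat.eq_or_lt_of_le hj with rfl | hlt
      · exact le_rfl
      · exact (ih (by omega) j (by omega)).trans (hmono k (by omega)).le
  have hbd : ∀ j ≤ N + 1, (0:ℝ) ≤ h j ∧ h j ≤ H := by
    intro j hj
    constructor
    · rw [← hh0]; exact hmono' j hj 0 (Nat.zero_le _)
    · rw [← hhN]; exact hmono' (N+1) le_rfl j hj
  have hIccsub' : ∀ j ≤ N, Set.Icc (h j) (h (j+1)) ⊆ Set.Icc (0:ℝ) H := by
    intro j hj z hz
    exact ⟨le_trans (hbd j (by omega)).1 hz.1, le_trans hz.2 (hbd (j+1) (by omega)).2⟩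
  -- continuity of u and v
  have huIcc : Set.uIcc (0:ℝ) H = Set.Icc 0 H := Set.uIcc_of_le hH.le
  have hu_cont : ContinuousOn u (Set.Icc 0 H) := by
    have h1 : ContinuousOn (fun y => u 0 + ∫ t in (0:ℝ)..y, g t) (Set.Icc 0 H) := by
      apply ContinuousOn.add continuousOn_const
      have := intervalIntegral.continuousOn_primitive_interval' hg_int
        (Set.left_mem_uIcc (a := (0:ℝ)) (b := H))
      rwa [huIcc] at this
    exact h1.congr fun y hy => hu_rep y hy
  have hv_cont : ContinuousOn v (Set.Icc 0 H) := by
    have h1 : ContinuousOn (fun y => v 0 + ∫ t in (0:ℝ)..y, (c t * μ ^ 2 - lam) * u t)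
        (Set.Icc 0 H) := by
      apply ContinuousOn.add continuousOn_const
      have := intervalIntegral.continuousOn_primitive_interval' hF_int
        (Set.left_mem_uIcc (a := (0:ℝ)) (b := H))
      rwa [huIcc] at this
    exact h1.congr fun y hy => hv_rep y hy
  have hae : ∀ᵐ t ∂(volume : Measure ℝ), t ∈ Set.Ioo (0:ℝ) H → v t = c t * g t :=
    (ae_restrict_iff' measurableSet_Ioo).mp hvg
  -- the key per-piece energy identity
  have key : ∀ j ≤ N, ∀ y ∈ Set.Icc (h j) (h (j+1)),
      cv j * μ ^ 2 * (L - cv j) * u y ^ 2 + v y ^ 2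
        = cv j * μ ^ 2 * (L - cv j) * β j ^ 2 := by
    intro j hj
    have hab : h j < h (j+1) := hmono j hj
    have ha0 : (0:ℝ) ≤ h j := (hbd j (by omega)).1
    have hbH : h (j+1) ≤ H := (hbd (j+1) (by omega)).2
    have hIoosub : Set.Ioo (h j) (h (j+1)) ⊆ Set.Ioo (0:ℝ) H := fun z hz =>
      ⟨lt_of_le_of_lt ha0 hz.1, lt_of_lt_of_le hz.2 hbH⟩
    have hcj : 0 < cv j := lt_of_lt_of_le hcm (hcv j hj).1
    have hpj : 0 < L - cv j := by have := (hcv j hj).2; linarith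
    set ω := μ * Real.sqrt ((L - cv j) / cv j) with hωdef
    have hω2 : cv j ^ 2 * ω ^ 2 = cv j * μ ^ 2 * (L - cv j) := by
      rw [hωdef, mul_pow, Real.sq_sqrt (by positivity)]
      field_simp
    refine aux_ext hab (hIccsub' j hj) ?_ ?_
    · exact (continuousOn_const.mul (hu_cont.pow 2)).add (hv_cont.pow 2)
    intro y hy
    have hy0H : y ∈ Set.Ioo (0:ℝ) H := hIoosub hy
    have hyIcc : y ∈ Set.Icc (0:ℝ) H := ⟨hy0H.1.le, hy0H.2.le⟩
    have hu_eq : ∀ z ∈ Set.Ioo (h j) (h (j+1)), u z = β j * Real.sin (ω * (z - γ j)) :=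
      hrep j hj
    have hmemnhds : Set.Ioo (h j) (h (j+1)) ∈ 𝓝 y := Ioo_mem_nhds hy.1 hy.2
    -- derivative from the sine representation
    have hD1 : HasDerivAt u (β j * (Real.cos (ω * (y - γ j)) * ω)) y := by
      have hlin : HasDerivAt (fun z : ℝ => ω * (z - γ j)) ω y := by
        simpa using ((hasDerivAt_id y).sub_const (γ j)).const_mul ω
      have hsin : HasDerivAt (fun z => Real.sin (ω * (z - γ j)))
          (Real.cos (ω * (y - γ j)) * ω) y := (Real.hasDerivAt_sin _).comp y hlin
      have hfull := hsin.const_mul (β j)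
      exact HasDerivAt.congr_of_eventuallyEq hfull
        (Filter.eventuallyEq_of_mem hmemnhds hu_eq)
    -- representation of u through the flux near y
    have hgyz : ∀ z ∈ Set.Icc (0:ℝ) H, IntervalIntegrable g volume y z := by
      intro z hz
      apply hg_int.mono_set
      rw [huIcc]
      exact (Set.ordConnected_Icc).uIcc_subset hyIcc hz
    have hu_int : ∀ z ∈ Set.Ioo (h j) (h (j+1)), u z = u y + ∫ t in y..z, v t / cv j := by
      intro z hz
      have hzIcc : z ∈ Set.Icc (0:ℝ) H := ⟨(hIoosub hz).1.le, (hIoosub hz).2.le⟩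
      have h0z : IntervalIntegrable g volume 0 z := by
        apply hg_int.mono_set
        rw [huIcc]
        exact (Set.ordConnected_Icc).uIcc_subset (Set.left_mem_Icc.mpr hH.le) hzIcc
      have h0y : IntervalIntegrable g volume 0 y := by
        apply hg_int.mono_set
        rw [huIcc]
        exact (Set.ordConnected_Icc).uIcc_subset (Set.left_mem_Icc.mpr hH.le) hyIcc
      have hdiff : u z - u y = ∫ t in y..z, g t := by
        rw [hu_rep z hzIcc, hu_rep y hyIcc]
        have := intervalIntegral.integral_interval_sub_left h0z h0y
        linarith [this]
      have hcongr : (∫ t in y..z, g t) = ∫ t in y..z, v t / cv j := by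
        apply intervalIntegral.integral_congr_ae
        filter_upwards [hae] with t ht htm
        have htIoo : t ∈ Set.Ioo (h j) (h (j+1)) := by
          have h1 : h j < min y z := lt_min hy.1 hz.1
          have h2 : max y z < h (j+1) := max_lt hy.2 hz.2
          exact ⟨h1.trans htm.1, lt_of_le_of_lt htm.2 h2⟩
        have hct : c t = cv j := hstep j hj t htIoo
        have hvt : v t = cv j * g t := by rw [ht (hIoosub htIoo), hct]
        rw [eq_div_iff hcj.ne', hvt]
        ring
      rw [← hcongr]
      linarith [hdiff]
    have hvcont_y : ContinuousAt v y :=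
      hv_cont.continuousAt (Icc_mem_nhds hy0H.1 hy0H.2)
    have hD2 : HasDerivAt u (v y / cv j) y := by
      have hint : IntervalIntegrable (fun t => v t / cv j) volume y y :=
        IntervalIntegrable.refl
      have hms : StronglyMeasurableAtFilter (fun t => v t / cv j) (𝓝 y) volume := by
        refine ContinuousAt.stronglyMeasurableAtFilter isOpen_Ioo ?_ y hy0H
        intro x hx
        exact (hv_cont.continuousAt (Icc_mem_nhds hx.1 hx.2)).div_const _
      have hca : ContinuousAt (fun t => v t / cv j) y := hvcont_y.div_const _
      have hD := (intervalIntegral.integral_hasDerivAt_right hint hms hca).const_add (u y)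
      exact HasDerivAt.congr_of_eventuallyEq hD
        (Filter.eventuallyEq_of_mem hmemnhds hu_int)
    have huniq : v y / cv j = β j * (Real.cos (ω * (y - γ j)) * ω) := hD2.unique hD1
    have hvy : v y = cv j * (β j * (Real.cos (ω * (y - γ j)) * ω)) := by
      rw [div_eq_iff hcj.ne'] at huniq
      linarith [huniq]
    have huy : u y = β j * Real.sin (ω * (y - γ j)) := hu_eq y hy
    have hpyth : Real.sin (ω * (y - γ j)) ^ 2 + Real.cos (ω * (y - γ j)) ^ 2 = 1 :=
      Real.sin_sq_add_cos_sq _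
    rw [huy, hvy]
    linear_combination (cv j * μ ^ 2 * (L - cv j) * β j ^ 2) * hpyth
      + (β j * Real.cos (ω * (y - γ j))) ^ 2 * hω2
  -- positivity of the energy coefficients
  have Ppos : ∀ j ≤ N, 0 < cv j * μ ^ 2 * (L - cv j) := by
    intro j hj
    have hcj : 0 < cv j := lt_of_lt_of_le hcm (hcv j hj).1
    have hpj : 0 < L - cv j := by have := (hcv j hj).2; linarith
    positivity
  -- one-step comparison across an interface
  have step : ∀ j < N,
      β (j+1) ^ 2 ≤ β j ^ 2 * Real.exp (κ * |cv (j+1) - cv j|) ∧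
      β j ^ 2 ≤ β (j+1) ^ 2 * Real.exp (κ * |cv (j+1) - cv j|) := by
    intro j hjN
    have hj : j ≤ N := hjN.le
    have hj1 : j + 1 ≤ N := hjN
    have hx1 : h (j+1) ∈ Set.Icc (h j) (h (j+1)) := ⟨(hmono j hj).le, le_rfl⟩
    have hx2 : h (j+1) ∈ Set.Icc (h (j+1)) (h (j+1+1)) := ⟨le_rfl, (hmono (j+1) hj1).le⟩
    have E1 := key j hj (h (j+1)) hx1
    have E2 := key (j+1) hj1 (h (j+1)) hx2
    set x := h (j+1) with hxdef
    set P := cv j * μ ^ 2 * (L - cv j) with hPdef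
    set Q := cv (j+1) * μ ^ 2 * (L - cv (j+1)) with hQdef
    clear_value x
    have hP : 0 < P := Ppos j hj
    have hQ : 0 < Q := Ppos (j+1) hj1
    have hcj : 0 < cv j := lt_of_lt_of_le hcm (hcv j hj).1
    have hpj : 0 < L - cv j := by have := (hcv j hj).2; linarith
    have hcj1 : 0 < cv (j+1) := lt_of_lt_of_le hcm (hcv (j+1) hj1).1
    have hpj1 : 0 < L - cv (j+1) := by have := (hcv (j+1) hj1).2; linarith
    have hβj : β j ^ 2 = u x ^ 2 + v x ^ 2 / P := by
      have h1 : v x ^ 2 / P = β j ^ 2 - u x ^ 2 := by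
        rw [div_eq_iff hP.ne']
        linear_combination E1
      rw [h1]; ring
    have hβj1 : β (j+1) ^ 2 = u x ^ 2 + v x ^ 2 / Q := by
      have h1 : v x ^ 2 / Q = β (j+1) ^ 2 - u x ^ 2 := by
        rw [div_eq_iff hQ.ne']
        linear_combination E2
      rw [h1]; ring
    have hfrac1 : P / Q ≤ Real.exp (κ * |cv (j+1) - cv j|) := by
      have h1 := aux_logf hcm hε hLge (hcv j hj) (hcv (j+1) hj1)
      rw [← hκdef, abs_sub_comm] at h1
      have hPQ : P / Q = cv j * (L - cv j) / (cv (j+1) * (L - cv (j+1))) := by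
        rw [div_eq_div_iff hQ.ne' (by positivity : (0:ℝ) < cv (j+1) * (L - cv (j+1))).ne',
          hPdef, hQdef]
        ring
      rw [hPQ]
      exact h1
    have hfrac2 : Q / P ≤ Real.exp (κ * |cv (j+1) - cv j|) := by
      have h1 := aux_logf hcm hε hLge (hcv (j+1) hj1) (hcv j hj)
      rw [← hκdef] at h1
      have hQP : Q / P = cv (j+1) * (L - cv (j+1)) / (cv j * (L - cv j)) := by
        rw [div_eq_div_iff hP.ne' (by positivity : (0:ℝ) < cv j * (L - cv j)).ne',
          hPdef, hQdef]
        ring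
      rw [hQP]
      exact h1
    have hR1 : 1 ≤ Real.exp (κ * |cv (j+1) - cv j|) := by
      rw [← Real.exp_zero]
      exact Real.exp_le_exp.mpr (mul_nonneg hκpos.le (abs_nonneg _))
    constructor
    · calc β (j+1) ^ 2 = u x ^ 2 + v x ^ 2 / Q := hβj1
        _ ≤ Real.exp (κ * |cv (j+1) - cv j|) * (u x ^ 2 + v x ^ 2 / P) :=
            aux_ratio (sq_nonneg _) (sq_nonneg _) hP hQ hR1 hfrac1
        _ = β j ^ 2 * Real.exp (κ * |cv (j+1) - cv j|) := by rw [← hβj]; ring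
    · calc β j ^ 2 = u x ^ 2 + v x ^ 2 / P := hβj
        _ ≤ Real.exp (κ * |cv (j+1) - cv j|) * (u x ^ 2 + v x ^ 2 / Q) :=
            aux_ratio (sq_nonneg _) (sq_nonneg _) hQ hP hR1 hfrac2
        _ = β (j+1) ^ 2 * Real.exp (κ * |cv (j+1) - cv j|) := by rw [← hβj1]; ring
  -- chain the one-step comparisons
  have chain : ∀ q ≤ N,
      β q ^ 2 ≤ β 0 ^ 2 * Real.exp (κ * ∑ j ∈ Finset.range q, |cv (j + 1) - cv j|) ∧
      β 0 ^ 2 ≤ β q ^ 2 * Real.exp (κ * ∑ j ∈ Finset.range q, |cv (j + 1) - cv j|) := by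
    intro q
    induction q with
    | zero => intro _; simp
    | succ q ih =>
      intro hq
      have hqN : q < N := hq
      obtain ⟨ih1, ih2⟩ := ih hqN.le
      obtain ⟨s1, s2⟩ := step q hqN
      rw [Finset.sum_range_succ]
      constructor
      · calc β (q+1) ^ 2 ≤ β q ^ 2 * Real.exp (κ * |cv (q+1) - cv q|) := s1
          _ ≤ β 0 ^ 2 * Real.exp (κ * ∑ j ∈ Finset.range q, |cv (j + 1) - cv j|) *
              Real.exp (κ * |cv (q+1) - cv q|) :=
            mul_le_mul_of_nonneg_right ih1 (Real.exp_nonneg _)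
          _ = β 0 ^ 2 * Real.exp (κ * ((∑ j ∈ Finset.range q, |cv (j + 1) - cv j|) +
              |cv (q+1) - cv q|)) := by
            rw [mul_assoc, ← Real.exp_add, ← mul_add]
      · calc β 0 ^ 2 ≤ β q ^ 2 * Real.exp (κ * ∑ j ∈ Finset.range q, |cv (j + 1) - cv j|) :=
            ih2
          _ ≤ β (q+1) ^ 2 * Real.exp (κ * |cv (q+1) - cv q|) *
              Real.exp (κ * ∑ j ∈ Finset.range q, |cv (j + 1) - cv j|) :=
            mul_le_mul_of_nonneg_right s2 (Real.exp_nonneg _)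
          _ = β (q+1) ^ 2 * Real.exp (κ * ((∑ j ∈ Finset.range q, |cv (j + 1) - cv j|) +
              |cv (q+1) - cv q|)) := by
            rw [mul_assoc, ← Real.exp_add, ← mul_add, add_comm (|cv (q+1) - cv q|)]
  have hSmono : ∀ q ≤ N, (∑ j ∈ Finset.range q, |cv (j + 1) - cv j|) ≤ S := by
    intro q hq
    rw [hSdef]
    exact Finset.sum_le_sum_of_subset_of_nonneg (Finset.range_subset_range.mpr hq)
      (fun i _ _ => abs_nonneg _)
  have main : ∀ q ≤ N,
      β q ^ 2 ≤ β 0 ^ 2 * Real.exp (κ * S) ∧ β 0 ^ 2 ≤ β q ^ 2 * Real.exp (κ * S) := by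
    intro q hq
    obtain ⟨c1, c2⟩ := chain q hq
    have hexple : Real.exp (κ * ∑ j ∈ Finset.range q, |cv (j + 1) - cv j|) ≤
        Real.exp (κ * S) :=
      Real.exp_le_exp.mpr (mul_le_mul_of_nonneg_left (hSmono q hq) hκpos.le)
    exact ⟨c1.trans (mul_le_mul_of_nonneg_left hexple (sq_nonneg _)),
      c2.trans (mul_le_mul_of_nonneg_left hexple (sq_nonneg _))⟩
  -- covering of [0, H] by the closed pieces
  have cover : ∀ y ∈ Set.Icc (0:ℝ) H, ∃ j ≤ N, y ∈ Set.Icc (h j) (h (j+1)) := by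
    suffices haux : ∀ k ≤ N, ∀ y : ℝ, h 0 ≤ y → y ≤ h (k+1) →
        ∃ j ≤ k, y ∈ Set.Icc (h j) (h (j+1)) by
      intro y hy
      exact haux N le_rfl y (by rw [hh0]; exact hy.1) (by rw [hhN]; exact hy.2)
    intro k
    induction k with
    | zero => intro _ y h0y hy1; exact ⟨0, le_rfl, h0y, hy1⟩
    | succ k ih =>
      intro hk y h0y hy
      by_cases hcase : y ≤ h (k+1)
      · obtain ⟨j, hj, hmem⟩ := ih (by omega) y h0y hcase
        exact ⟨j, by omega, hmem⟩
      · exact ⟨k+1, le_rfl, ⟨(not_le.mp hcase).le, hy⟩⟩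
  -- β 0 is nonzero
  have hβ0 : β 0 ≠ 0 := by
    intro h0
    have hzero : ∀ j ≤ N, β j = 0 := by
      intro j hj
      have h1 := (main j hj).1
      rw [h0] at h1
      have h2 : β j ^ 2 = 0 := le_antisymm (by simpa using h1) (sq_nonneg _)
      exact pow_eq_zero_iff (by norm_num) |>.mp h2
    have hu_zero : ∀ y ∈ Set.Icc (0:ℝ) H, u y = 0 := by
      intro y hy
      obtain ⟨j, hj, hyj⟩ := cover y hy
      refine aux_ext (hmono j hj) (hIccsub' j hj) hu_cont ?_ y hyj
      intro z hz
      rw [hrep j hj z hz, hzero j hj, zero_mul]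
    obtain ⟨y, hy, hne⟩ := hnt
    exact hne (hu_zero y hy)
  refine ⟨?_, ?_, ?_⟩
  · intro j hj hβj0
    have h1 := (main j hj).2
    rw [hβj0] at h1
    have h2 : β 0 ^ 2 = 0 := le_antisymm (by simpa using h1) (sq_nonneg _)
    exact hβ0 (pow_eq_zero_iff (by norm_num) |>.mp h2)
  · intro q hq
    obtain ⟨m1, m2⟩ := main q hq
    refine ⟨?_, m1⟩
    calc β 0 ^ 2 * Real.exp (-κ * S) = β 0 ^ 2 / Real.exp (κ * S) := by
          rw [neg_mul, Real.exp_neg, div_eq_mul_inv]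
      _ ≤ β q ^ 2 := (div_le_iff₀ (Real.exp_pos _)).mpr m2
  · intro q hq q' hq'
    have m1 := (main q hq).1
    have m2' := (main q' hq').2
    calc β q ^ 2 ≤ β 0 ^ 2 * Real.exp (κ * S) := m1
      _ ≤ β q' ^ 2 * Real.exp (κ * S) * Real.exp (κ * S) :=
          mul_le_mul_of_nonneg_right m2' (Real.exp_nonneg _)
      _ = β q' ^ 2 * Real.exp (2 * κ * S) := by
          rw [mul_assoc, ← Real.exp_add]
          congr 1
          ring
end
end

section
/- (Minimal amplitude hypothesis for coefficients of bounded variation, uniformly in the class.) Fix ε > 0, V > 0 and μ₁ > 0. Then there exists r > 0, depending only on ε, c_m, c_M, V, H, μ₁, such that for every function c : [0,H] → ℝ with c_m ≤ c(y) ≤ c_M for all y and total variation at most V, every μ ≥ μ₁, every λ ≥ (c_M + ε)μ², and every normalized Dirichlet solution u (with flux v) of the reduced problem with coefficient c and parameters (μ,λ): u(y)² + v(y)² ≥ r² for all y ∈ [0,H]. -/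
set_option maxHeartbeats 1000000

open MeasureTheory Set Filter Topology
open intervalIntegral

noncomputable section

lemma fubini_swap {a x : ℝ} (hax : a ≤ x) {g k : ℝ → ℝ}
    (hg : IntegrableOn g (Ioc a x)) (hk : IntegrableOn k (Ioc a x)) :
    ∫ t in a..x, (∫ s in a..t, g s) * k t = ∫ s in a..x, g s * (∫ t in s..x, k t) := by
  set m := volume.restrict (Ioc a x) with hm
  have hmeas : MeasurableSet {p : ℝ × ℝ | p.2 ≤ p.1} :=
    (isClosed_le continuous_snd continuous_fst).measurableSet
  set F : ℝ → ℝ → ℝ := fun t s => if s ≤ t then g s * k t else 0 with hF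
  have hint : Integrable (Function.uncurry F) (m.prod m) := by
    have h1 : Integrable (fun z : ℝ × ℝ => k z.1 * g z.2) (m.prod m) :=
      Integrable.mul_prod (hk : Integrable k m) (hg : Integrable g m)
    have h2 := (h1.indicator hmeas)
    refine h2.congr (Filter.Eventually.of_forall ?_)
    rintro ⟨t, s⟩
    simp only [Function.uncurry, F, indicator_apply, mem_setOf_eq]
    by_cases h : s ≤ t <;> simp [h, mul_comm]
  have swap := MeasureTheory.integral_integral_swap hint
  have lhs : ∫ t in a..x, (∫ s in a..t, g s) * k t = ∫ t, (∫ s, F t s ∂m) ∂m := by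
    rw [intervalIntegral.integral_of_le hax, hm]
    refine setIntegral_congr_fun measurableSet_Ioc ?_
    intro t ht
    show (∫ s in a..t, g s) * k t = ∫ s in Ioc a x, F t s
    have : ∫ s in Ioc a x, F t s = (∫ s in Ioc a x, (Iic t).indicator g s) * k t := by
      rw [← MeasureTheory.integral_mul_const]
      refine setIntegral_congr_fun measurableSet_Ioc ?_
      intro s _
      simp only [F, indicator_apply, mem_Iic]
      by_cases h : s ≤ t <;> simp [h]
    rw [this, setIntegral_indicator measurableSet_Iic]
    have : Ioc a x ∩ Iic t = Ioc a t := by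
      ext s; simp only [mem_inter_iff, mem_Ioc, mem_Iic]
      constructor
      · rintro ⟨⟨h1, _⟩, h2⟩; exact ⟨h1, h2⟩
      · rintro ⟨h1, h2⟩; exact ⟨⟨h1, h2.trans ht.2⟩, h2⟩
    rw [this, intervalIntegral.integral_of_le ht.1.le]
  have rhs : ∫ s in a..x, g s * (∫ t in s..x, k t) = ∫ s, (∫ t, F t s ∂m) ∂m := by
    rw [intervalIntegral.integral_of_le hax, hm]
    refine setIntegral_congr_fun measurableSet_Ioc ?_
    intro s hs
    show g s * (∫ t in s..x, k t) = ∫ t in Ioc a x, F t s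
    have : ∫ t in Ioc a x, F t s = g s * (∫ t in Ioc a x, (Ici s).indicator k t) := by
      rw [← MeasureTheory.integral_const_mul]
      refine setIntegral_congr_fun measurableSet_Ioc ?_
      intro t _
      simp only [F, indicator_apply, mem_Ici]
      by_cases h : s ≤ t <;> simp [h]
    rw [this, setIntegral_indicator measurableSet_Ici]
    have : Ioc a x ∩ Ici s = Icc s x := by
      ext t; simp only [mem_inter_iff, mem_Ioc, mem_Icc, mem_Ici]
      constructor
      · rintro ⟨⟨_, h2⟩, h3⟩; exact ⟨h3, h2⟩
      · rintro ⟨h1, h2⟩; exact ⟨⟨hs.1.trans_le h1, h2⟩, h1⟩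
    rw [this, integral_Icc_eq_integral_Ioc, intervalIntegral.integral_of_le hs.2]
  rw [lhs, rhs, swap]
lemma primitive_mul_primitive {a b : ℝ} (hab : a ≤ b) {g k P Q : ℝ → ℝ}
    (hg : IntervalIntegrable g volume a b) (hk : IntervalIntegrable k volume a b)
    (hP : ∀ x ∈ Icc a b, P x = P a + ∫ t in a..x, g t)
    (hQ : ∀ x ∈ Icc a b, Q x = Q a + ∫ t in a..x, k t) :
    ∀ x ∈ Icc a b, P x * Q x = P a * Q a + ∫ t in a..x, (P t * k t + Q t * g t) := by
  have hPc : ContinuousOn P (Icc a b) := by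
    have h1 : ContinuousOn (fun y => P a + ∫ t in a..y, g t) (Icc a b) := by
      have := intervalIntegral.continuousOn_primitive_interval'
        (a := a) (b₁ := a) (b₂ := b) hg (by simp [Set.left_mem_uIcc])
      rw [uIcc_of_le hab] at this
      exact continuousOn_const.add this
    exact ContinuousOn.congr h1 hP
  have hQc : ContinuousOn Q (Icc a b) := by
    have h1 : ContinuousOn (fun y => Q a + ∫ t in a..y, k t) (Icc a b) := by
      have := intervalIntegral.continuousOn_primitive_interval'
        (a := a) (b₁ := a) (b₂ := b) hk (by simp [Set.left_mem_uIcc])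
      rw [uIcc_of_le hab] at this
      exact continuousOn_const.add this
    exact ContinuousOn.congr h1 hQ
  intro x hx
  have hax : a ≤ x := hx.1
  have hsub : uIcc a x ⊆ uIcc a b := by
    rw [uIcc_of_le hax, uIcc_of_le hab]; exact Icc_subset_Icc le_rfl hx.2
  have hg' : IntervalIntegrable g volume a x := hg.mono_set hsub
  have hk' : IntervalIntegrable k volume a x := hk.mono_set hsub
  have hPcx : ContinuousOn P (uIcc a x) := hPc.mono (hsub.trans (by rw [uIcc_of_le hab]))
  have hQcx : ContinuousOn Q (uIcc a x) := hQc.mono (hsub.trans (by rw [uIcc_of_le hab]))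
  have hPk : IntervalIntegrable (fun t => P t * k t) volume a x := hk'.continuousOn_mul hPcx
  have hQg : IntervalIntegrable (fun t => Q t * g t) volume a x := hg'.continuousOn_mul hQcx
  have prim_c : ContinuousOn (fun y => ∫ t in a..y, g t) (uIcc a x) :=
    intervalIntegral.continuousOn_primitive_interval' hg' (by simp [Set.left_mem_uIcc])
  have hprimk : IntervalIntegrable (fun t => (∫ s in a..t, g s) * k t) volume a x :=
    hk'.continuousOn_mul prim_c
  have e1 : (∫ t in a..x, (P t * k t + Q t * g t))
      = (∫ t in a..x, P t * k t) + ∫ t in a..x, Q t * g t :=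
    intervalIntegral.integral_add hPk hQg
  have e2 : (∫ t in a..x, P t * k t)
      = P a * (∫ t in a..x, k t) + ∫ t in a..x, (∫ s in a..t, g s) * k t := by
    rw [← intervalIntegral.integral_const_mul, ← intervalIntegral.integral_add
      (hk'.const_mul _) hprimk]
    refine intervalIntegral.integral_congr ?_
    intro t ht
    rw [uIcc_of_le hax] at ht
    show P t * k t = P a * k t + (∫ s in a..t, g s) * k t
    rw [hP t ⟨ht.1, ht.2.trans hx.2⟩]; ring
  have e3 : (∫ t in a..x, (∫ s in a..t, g s) * k t)
      = ∫ s in a..x, g s * (Q x - Q s) := by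
    rw [fubini_swap hax ((intervalIntegrable_iff_integrableOn_Ioc_of_le hax).1 hg')
      ((intervalIntegrable_iff_integrableOn_Ioc_of_le hax).1 hk')]
    refine intervalIntegral.integral_congr ?_
    intro s hs
    rw [uIcc_of_le hax] at hs
    have h1 := hQ x hx
    have h2 := hQ s ⟨hs.1, hs.2.trans hx.2⟩
    have hks : IntervalIntegrable k volume a s := hk'.mono_set
      (by rw [uIcc_of_le hs.1, uIcc_of_le hax]; exact Icc_subset_Icc le_rfl hs.2)
    have hksx : IntervalIntegrable k volume s x := hk'.mono_set
      (by rw [uIcc_of_le hs.2, uIcc_of_le hax]; exact Icc_subset_Icc hs.1 le_rfl)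
    have hadd := intervalIntegral.integral_add_adjacent_intervals hks hksx
    show g s * (∫ t in s..x, k t) = g s * (Q x - Q s)
    have : (∫ t in s..x, k t) = Q x - Q s := by rw [h1, h2, ← hadd]; ring
    rw [this]
  have e4 : (∫ s in a..x, g s * (Q x - Q s))
      = Q x * (∫ s in a..x, g s) - ∫ s in a..x, Q s * g s := by
    rw [← intervalIntegral.integral_const_mul, ← intervalIntegral.integral_sub
      (hg'.const_mul _) hQg]
    refine intervalIntegral.integral_congr ?_
    intro s _; show g s * (Q x - Q s) = Q x * g s - Q s * g s; ring
  have hPx := hP x hx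
  have hQx := hQ x hx
  have hig : (∫ t in a..x, g t) = P x - P a := by rw [hPx]; ring
  have hik : (∫ t in a..x, k t) = Q x - Q a := by rw [hQx]; ring
  rw [e1, e2, e3, e4, hig, hik]; ring

lemma exp_neg_le_one_sub_two {y : ℝ} (h0 : 0 ≤ y) (h1 : y ≤ 1/4) :
    Real.exp (-(4*y)) ≤ 1 - 2*y := by
  have h2 : (1:ℝ) + 4*y ≤ Real.exp (4*y) := by
    have := Real.add_one_le_exp (4*y); linarith
  have h3 : (0:ℝ) < 1 + 4*y := by linarith
  have h4 : Real.exp (-(4*y)) = 1 / Real.exp (4*y) := by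
    rw [Real.exp_neg]; ring
  rw [h4]
  have h5 : 1 / Real.exp (4*y) ≤ 1 / (1 + 4*y) :=
    one_div_le_one_div_of_le h3 h2
  refine h5.trans ?_
  rw [div_le_iff₀ h3]
  nlinarith

lemma energy_two_sided {s t : ℝ} (hst : s ≤ t) {F h : ℝ → ℝ} {C : ℝ} (hC : 0 ≤ C)
    (hFc : ContinuousOn F (Icc s t)) (hFpos : ∀ x ∈ Icc s t, 0 ≤ F x)
    (hh : IntervalIntegrable h volume s t)
    (hrep : ∀ x ∈ Icc s t, F x = F s + ∫ τ in s..x, h τ)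
    (hbound : ∀ᵐ x ∂(volume.restrict (Ioc s t)), |h x| ≤ C * F x)
    (hsmall : C * (t - s) ≤ 1/4) :
    F s * Real.exp (-(4 * (C * (t - s)))) ≤ F t ∧
    F t * Real.exp (-(4 * (C * (t - s)))) ≤ F s := by
  set y := C * (t - s) with hy
  have hy0 : 0 ≤ y := mul_nonneg hC (by linarith)
  obtain ⟨z, hz, hzmax⟩ := isCompact_Icc.exists_isMaxOn (nonempty_Icc.2 hst) hFc
  set M := F z with hM
  have hMF : ∀ x ∈ Icc s t, F x ≤ M := hzmax
  have hM0 : 0 ≤ M := le_trans (hFpos s (left_mem_Icc.2 hst)) (hMF s (left_mem_Icc.2 hst))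
  -- integral bound on any subinterval [s, x], x ∈ Icc s t
  have key : ∀ x ∈ Icc s t, |∫ τ in s..x, h τ| ≤ y * M := by
    intro x hx
    have hsx : s ≤ x := hx.1
    have hh' : IntervalIntegrable h volume s x := hh.mono_set
      (by rw [uIcc_of_le hsx, uIcc_of_le hst]; exact Icc_subset_Icc le_rfl hx.2)
    have h1 : |∫ τ in s..x, h τ| ≤ ∫ τ in s..x, |h τ| :=
      intervalIntegral.abs_integral_le_integral_abs hsx
    have hbb : ∀ᵐ τ ∂(volume.restrict (Icc s x)), |h τ| ≤ C * M := by
      have hsub : Icc s x ⊆ Ioc s t ∪ {s} := by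
        intro τ hτ
        rcases eq_or_lt_of_le hτ.1 with rfl | hlt
        · exact Or.inr rfl
        · exact Or.inl ⟨hlt, hτ.2.trans hx.2⟩
      have hb2 : ∀ᵐ τ ∂(volume.restrict (Ioc s t ∪ {s})), |h τ| ≤ C * F τ := by
        rw [Measure.restrict_union' (by simp) (by simp)]
        rw [ae_add_measure_iff]
        constructor
        · exact hbound
        · simp [Measure.restrict_singleton]
      have hb3 : ∀ᵐ τ ∂(volume.restrict (Icc s x)), |h τ| ≤ C * F τ :=
        ae_restrict_of_ae_restrict_of_subset hsub hb2
      have hb4 : ∀ᵐ τ ∂(volume.restrict (Icc s x)), F τ ≤ M :=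
        (ae_restrict_iff' measurableSet_Icc).2 (Eventually.of_forall fun τ hτ =>
          hMF τ ⟨hτ.1, hτ.2.trans hx.2⟩)
      filter_upwards [hb3, hb4] with τ e1 e2
      exact e1.trans (by nlinarith)
    have h2 : (∫ τ in s..x, |h τ|) ≤ ∫ τ in s..x, C * M :=
      intervalIntegral.integral_mono_ae_restrict hsx hh'.abs
        (intervalIntegrable_const) hbb
    have h3 : (∫ τ in s..x, C * M) = C * (x - s) * M := by
      simp [intervalIntegral.integral_const]; ring
    have h4 : C * (x - s) * M ≤ y * M := by
      have : C * (x - s) ≤ y := by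
        rw [hy]; exact mul_le_mul_of_nonneg_left (by linarith [hx.2]) hC
      nlinarith
    linarith
  have hMs : M ≤ F s + y * M := by
    have h1 := hrep z hz
    have h2 : (∫ τ in s..z, h τ) ≤ y * M := (abs_le.1 (key z hz)).2
    show F z ≤ F s + y * M
    rw [h1]; linarith
  have hFs0 : 0 ≤ F s := hFpos s (left_mem_Icc.2 hst)
  have hFt0 : 0 ≤ F t := hFpos t (right_mem_Icc.2 hst)
  have hMle : M * (1 - y) ≤ F s := by nlinarith
  have hkeyt := key t (right_mem_Icc.2 hst)
  have hrept := hrep t (right_mem_Icc.2 hst)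
  have hexp := exp_neg_le_one_sub_two hy0 hsmall
  have hexp_pos := Real.exp_pos (-(4*y))
  constructor
  · -- F s * exp(-4y) ≤ F t
    have h1 : F t ≥ F s - y * M := by
      rw [hrept]; linarith [(abs_le.1 hkeyt).1]
    -- M ≤ F s / (1 - y), so y*M ≤ y F s/(1-y); F t ≥ F s (1-2y)/(1-y) ≥ F s (1-2y)
    have h2 : F s * Real.exp (-(4*y)) ≤ F s * (1 - 2*y) :=
      mul_le_mul_of_nonneg_left hexp hFs0
    have h3 : F s * (1 - 2*y) ≤ F s - y * M := by
      nlinarith [mul_le_mul_of_nonneg_left hMle hy0, mul_nonneg hy0 hM0,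
        mul_nonneg (mul_nonneg hy0 hy0) hM0]
    linarith
  · have h1 : F s ≥ F t - y * M := by
      rw [hrept]; linarith [(abs_le.1 hkeyt).2]
    have h2 : F t * Real.exp (-(4*y)) ≤ F t * (1 - 2*y) :=
      mul_le_mul_of_nonneg_left hexp hFt0
    have h3 : F t * (1 - y) ≤ F s := by
      nlinarith [mul_le_mul_of_nonneg_left hMle hy0]
    nlinarith

lemma var_Icc_add {c : ℝ → ℝ} {a b d : ℝ} (hab : a ≤ b) (hbd : b ≤ d) :
    eVariationOn c (Icc a b) + eVariationOn c (Icc b d) = eVariationOn c (Icc a d) := by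
  have := eVariationOn.Icc_add_Icc c (s := univ) hab hbd (mem_univ b)
  simpa using this

lemma var_partition {c : ℝ → ℝ} {p : ℕ → ℝ} (hp : Monotone p) (n : ℕ) :
    ∑ i ∈ Finset.range n, eVariationOn c (Icc (p i) (p (i+1)))
      = eVariationOn c (Icc (p 0) (p n)) := by
  induction n with
  | zero =>
    rw [Finset.sum_range_zero]
    have : eVariationOn c (Icc (p 0) (p 0)) = 0 :=
      eVariationOn.subsingleton c (fun x hx y hy => by
        simp only [Icc_self, mem_singleton_iff] at hx hy; rw [hx, hy])
    rw [this]
  | succ n ih =>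
    rw [Finset.sum_range_succ, ih, var_Icc_add (hp (Nat.zero_le n)) (hp (Nat.le_succ n))]

lemma var_point_le {c : ℝ → ℝ} {a b x y : ℝ} (hx : x ∈ Icc a b) (hy : y ∈ Icc a b) :
    ENNReal.ofReal |c x - c y| ≤ eVariationOn c (Icc a b) := by
  have := eVariationOn.edist_le c hx hy
  rwa [edist_dist, Real.dist_eq] at this

lemma log_sub_log_le {m x y : ℝ} (hm : 0 < m) (hx : m ≤ x) (hy : m ≤ y) :
    Real.log x - Real.log y ≤ |x - y| / m := by
  have hx0 : 0 < x := hm.trans_le hx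
  have hy0 : 0 < y := hm.trans_le hy
  have h1 : Real.log (x/y) ≤ x/y - 1 := Real.log_le_sub_one_of_pos (by positivity)
  rw [Real.log_div hx0.ne' hy0.ne'] at h1
  have h2 : x/y - 1 = (x - y)/y := by field_simp
  have h3 : (x - y)/y ≤ |x - y|/m := div_le_div₀ (abs_nonneg _) (le_abs_self _) hm hy
  linarith

lemma contOn_of_rep {A B : ℝ} (hAB : A ≤ B) {f P : ℝ → ℝ}
    (hf : IntervalIntegrable f volume A B)
    (hP : ∀ x ∈ Icc A B, P x = P A + ∫ t in A..x, f t) : ContinuousOn P (Icc A B) := by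
  have h1 : ContinuousOn (fun y => P A + ∫ t in A..y, f t) (Icc A B) := by
    have := intervalIntegral.continuousOn_primitive_interval'
      (a := A) (b₁ := A) (b₂ := B) hf (by simp [Set.left_mem_uIcc])
    rw [uIcc_of_le hAB] at this
    exact continuousOn_const.add this
  exact ContinuousOn.congr h1 hP

lemma rep_of_rep {A B : ℝ} {f P : ℝ → ℝ}
    (hf : IntervalIntegrable f volume A B)
    (hP : ∀ x ∈ Icc A B, P x = P A + ∫ t in A..x, f t) {s : ℝ} (hs : s ∈ Icc A B) :
    ∀ x ∈ Icc A B, P x = P s + ∫ t in s..x, f t := by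
  intro x hx
  have hAB : A ≤ B := hs.1.trans hs.2
  have h1 : IntervalIntegrable f volume A s := hf.mono_set
    (by rw [uIcc_of_le hs.1, uIcc_of_le hAB]; exact Icc_subset_Icc le_rfl hs.2)
  have h2 : IntervalIntegrable f volume s x := hf.mono_set
    (by
      rw [uIcc_of_le hAB]
      rcases le_total s x with h | h
      · rw [uIcc_of_le h]; exact Icc_subset_Icc hs.1 hx.2
      · rw [uIcc_of_ge h]; exact Icc_subset_Icc hx.1 hs.2)
  have hadd := intervalIntegral.integral_add_adjacent_intervals h1 h2
  rw [hP x hx, hP s hs, ← hadd]; ring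


/-- the minimal amplitude hypothesis for coefficients of bounded variation,
uniformly over the class of coefficients with total variation at most `V`. -/
theorem stmt17 (cm cM H : ℝ) (hcm : 0 < cm) (hcmM : cm < cM) (hH : 0 < H)
    (ε V μ₁ : ℝ) (hε : 0 < ε) (hV : 0 < V) (hμ₁ : 0 < μ₁) :
    ∃ r > (0:ℝ),
      ∀ c : ℝ → ℝ,
        (∀ y ∈ Set.Icc (0 : ℝ) H, cm ≤ c y ∧ c y ≤ cM) →
        eVariationOn c (Set.Icc 0 H) ≤ ENNReal.ofReal V →
        ∀ μ : ℝ, μ₁ ≤ μ → ∀ lam : ℝ, (cM + ε) * μ ^ 2 ≤ lam →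
        ∀ u v g : ℝ → ℝ, IsReducedSolutionOn 0 H c μ lam u v g →
        u 0 = 0 → u H = 0 → (∫ y in (0:ℝ)..H, u y ^ 2) = 1 →
        ∀ y ∈ Set.Icc (0 : ℝ) H, r ^ 2 ≤ u y ^ 2 + v y ^ 2 := by
  have hcM : 0 < cM := hcm.trans hcmM
  set K₀ : ℝ := 1/cm + 1/ε with hK₀def
  have hK₀ : 0 < K₀ := by positivity
  set EV : ℝ := Real.exp (-(K₀*V + 1)) with hEVdef
  have hEV : 0 < EV := Real.exp_pos _
  set β : ℝ := EV / H with hβdef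
  have hβ : 0 < β := by positivity
  have hmin : 0 < min 1 (cm*ε*μ₁^2) := lt_min one_pos (by positivity)
  obtain ⟨r, hr0, hr2⟩ : ∃ r : ℝ, 0 < r ∧ r^2 = β/2 * min 1 (cm*ε*μ₁^2) :=
    ⟨Real.sqrt (β/2 * min 1 (cm*ε*μ₁^2)), Real.sqrt_pos.2 (mul_pos (by positivity) hmin),
      Real.sq_sqrt (mul_pos (by positivity) hmin).le⟩
  refine ⟨r, hr0, ?_⟩
  intro c hc hvar μ hμ lam hlam u v g hsol hu0 huH hnorm y hy
  obtain ⟨hg, hg2, hu, hvg, hkint, hv⟩ := hsol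
  have hμ0 : 0 < μ := hμ₁.trans_le hμ
  have hμ2 : (0:ℝ) < μ^2 := by positivity
  have hμ12 : μ₁^2 ≤ μ^2 := by nlinarith
  have hlam0 : 0 < lam := lt_of_lt_of_le (by nlinarith) hlam
  set D : ℝ → ℝ := fun x => lam - c x*μ^2 with hDdef
  set wf : ℝ → ℝ := fun x => (c x * D x)⁻¹ with hwfdef
  set Λ : ℝ := lam - cm*μ^2 with hΛdef
  have hΛ : 0 < Λ := by nlinarith
  have hDlb : ∀ x ∈ Icc (0:ℝ) H, ε*μ^2 ≤ D x := by
    intro x hx; have := (hc x hx).2; simp only [hDdef]; nlinarith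
  have hDub : ∀ x ∈ Icc (0:ℝ) H, D x ≤ Λ := by
    intro x hx; have := (hc x hx).1; simp only [hDdef, hΛdef]; nlinarith
  have hεμΛ : ε*μ^2 ≤ Λ := by nlinarith
  set wmin : ℝ := (cM*Λ)⁻¹ with hwmindef
  set wmax : ℝ := (cm*(ε*μ^2))⁻¹ with hwmaxdef
  have hwmin0 : 0 < wmin := by positivity
  have hwmax0 : 0 < wmax := by positivity
  have hcDb : ∀ x ∈ Icc (0:ℝ) H, cm*(ε*μ^2) ≤ c x * D x ∧ c x * D x ≤ cM*Λ := by
    intro x hx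
    obtain ⟨h1, h2⟩ := hc x hx
    have h3 := hDlb x hx; have h4 := hDub x hx
    constructor
    · exact mul_le_mul h1 h3 (by positivity) (le_trans hcm.le h1)
    · exact mul_le_mul h2 h4 (le_trans (by positivity) h3) hcM.le
  have hwb : ∀ x ∈ Icc (0:ℝ) H, wmin ≤ wf x ∧ wf x ≤ wmax := by
    intro x hx
    obtain ⟨h1, h2⟩ := hcDb x hx
    have h0 : (0:ℝ) < cm*(ε*μ^2) := by positivity
    constructor
    · exact inv_anti₀ (h0.trans_le h1) h2
    · exact inv_anti₀ h0 h1
  set sW : ℝ := Real.sqrt wmin with hsWdef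
  have hsW : 0 < sW := Real.sqrt_pos.2 hwmin0
  set L : ℝ := (lam + 2*cM*μ^2) / (cm*(ε*μ^2))^2 with hLdef
  have hL : 0 < L := by positivity
  set G : ℝ → ℝ := fun x => u x^2 + wf x * v x^2 with hGdef
  have hG0 : ∀ x ∈ Icc (0:ℝ) H, 0 ≤ G x := by
    intro x hx
    have := (hwb x hx).1
    have : 0 ≤ wf x := le_trans hwmin0.le this
    simp only [hGdef]; positivity
  -- Lipschitz property of the weight
  have wLip : ∀ x ∈ Icc (0:ℝ) H, ∀ z ∈ Icc (0:ℝ) H, |wf x - wf z| ≤ L * |c x - c z| := by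
    intro x hx z hz
    obtain ⟨hA1, hA2⟩ := hcDb x hx
    obtain ⟨hB1, hB2⟩ := hcDb z hz
    have h0 : (0:ℝ) < cm*(ε*μ^2) := by positivity
    have hA0 : 0 < c x * D x := h0.trans_le hA1
    have hB0 : 0 < c z * D z := h0.trans_le hB1
    have hBA : c z * D z - c x * D x = (c z - c x) * (lam - (c z + c x)*μ^2) := by
      simp only [hDdef]; ring
    have hfactor : |lam - (c z + c x)*μ^2| ≤ lam + 2*cM*μ^2 := by
      have h1 := (hc x hx).1; have h2 := (hc x hx).2
      have h3 := (hc z hz).1; have h4 := (hc z hz).2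
      rw [abs_le]; constructor <;> nlinarith
    have hnum : |c z * D z - c x * D x| ≤ |c x - c z| * (lam + 2*cM*μ^2) := by
      rw [hBA, abs_mul, abs_sub_comm (c z) (c x)]
      exact mul_le_mul_of_nonneg_left hfactor (abs_nonneg _)
    have heq : wf x - wf z = (c z * D z - c x * D x) / ((c x * D x) * (c z * D z)) := by
      simp only [hwfdef]
      rw [inv_sub_inv hA0.ne' hB0.ne']
    rw [heq, abs_div, abs_of_pos (mul_pos hA0 hB0)]
    have hden : (cm*(ε*μ^2))^2 ≤ (c x * D x) * (c z * D z) := by nlinarith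
    calc |c z * D z - c x * D x| / ((c x * D x) * (c z * D z))
        ≤ (|c x - c z| * (lam + 2*cM*μ^2)) / (cm*(ε*μ^2))^2 :=
          div_le_div₀ (by positivity) hnum (by positivity) hden
      _ = L * |c x - c z| := by rw [hLdef]; ring
  -- multiplicative control of the weight
  have wratio : ∀ x ∈ Icc (0:ℝ) H, ∀ z ∈ Icc (0:ℝ) H,
      wf z * Real.exp (-(K₀ * |c x - c z|)) ≤ wf x := by
    intro x hx z hz
    obtain ⟨hA1, hA2⟩ := hcDb x hx
    obtain ⟨hB1, hB2⟩ := hcDb z hz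
    have h0 : (0:ℝ) < cm*(ε*μ^2) := by positivity
    have hA0 : 0 < c x * D x := h0.trans_le hA1
    have hB0 : 0 < c z * D z := h0.trans_le hB1
    have hcx0 : 0 < c x := lt_of_lt_of_le hcm (hc x hx).1
    have hcz0 : 0 < c z := lt_of_lt_of_le hcm (hc z hz).1
    have hDx0 : 0 < D x := lt_of_lt_of_le (by positivity) (hDlb x hx)
    have hDz0 : 0 < D z := lt_of_lt_of_le (by positivity) (hDlb z hz)
    have hlog1 : Real.log (c x) - Real.log (c z) ≤ |c x - c z| / cm :=
      log_sub_log_le hcm (hc x hx).1 (hc z hz).1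
    have hlog2 : Real.log (D x) - Real.log (D z) ≤ |c x - c z| / ε := by
      have h1 := log_sub_log_le (by positivity : (0:ℝ) < ε*μ^2) (hDlb x hx) (hDlb z hz)
      have h2 : |D x - D z| = μ^2 * |c x - c z| := by
        have : D x - D z = (c z - c x) * μ^2 := by simp only [hDdef]; ring
        rw [this, abs_mul, abs_of_pos hμ2, abs_sub_comm]; ring
      rw [h2] at h1
      calc Real.log (D x) - Real.log (D z) ≤ μ^2 * |c x - c z| / (ε*μ^2) := h1
        _ = |c x - c z| / ε := by field_simp
    have hkey : Real.log (c x * D x) - Real.log (c z * D z) ≤ K₀ * |c x - c z| := by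
      rw [Real.log_mul hcx0.ne' hDx0.ne', Real.log_mul hcz0.ne' hDz0.ne', hK₀def]
      have : (1/cm + 1/ε) * |c x - c z| = |c x - c z|/cm + |c x - c z|/ε := by ring
      rw [this]; linarith
    have hwfx : wf x = Real.exp (- Real.log (c x * D x)) := by
      simp only [hwfdef]
      rw [Real.exp_neg, Real.exp_log hA0]
    have hwfz : wf z = Real.exp (- Real.log (c z * D z)) := by
      simp only [hwfdef]
      rw [Real.exp_neg, Real.exp_log hB0]
    rw [hwfx, hwfz, ← Real.exp_add]
    exact Real.exp_le_exp.2 (by linarith)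
  -- continuity of u and v
  have hucont : ContinuousOn u (Icc 0 H) := contOn_of_rep hH.le hg hu
  have hvcont : ContinuousOn v (Icc 0 H) := contOn_of_rep hH.le hkint hv
  -- variation facts
  have hfinIcc : ∀ A B : ℝ, A ∈ Icc (0:ℝ) H → B ∈ Icc (0:ℝ) H →
      eVariationOn c (Icc A B) ≠ ⊤ := by
    intro A B hA hB
    refine ne_top_of_le_ne_top ENNReal.ofReal_ne_top (le_trans (eVariationOn.mono c ?_) hvar)
    intro x hx; exact ⟨le_trans hA.1 hx.1, le_trans hx.2 hB.2⟩
  have habsVar : ∀ A B : ℝ, A ∈ Icc (0:ℝ) H → B ∈ Icc (0:ℝ) H →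
      ∀ x ∈ Icc A B, ∀ z ∈ Icc A B, |c x - c z| ≤ (eVariationOn c (Icc A B)).toReal := by
    intro A B hA hB x hx z hz
    have h1 := var_point_le (c := c) hx hz
    have h2 : |c x - c z| = (ENNReal.ofReal |c x - c z|).toReal :=
      (ENNReal.toReal_ofReal (abs_nonneg _)).symm
    rw [h2]; exact ENNReal.toReal_mono (hfinIcc A B hA hB) h1
  -- the propagation estimate
  have prop : ∀ s ∈ Icc (0:ℝ) H, ∀ t ∈ Icc (0:ℝ) H, s ≤ t →
      G s * EV ≤ G t ∧ G t * EV ≤ G s := by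
    intro s hs t ht hst
    set Cmax : ℝ := Λ*L*V/sW with hCmaxdef
    have hCmax0 : 0 ≤ Cmax := by positivity
    obtain ⟨n0, hn0⟩ := exists_nat_ge (4*Cmax*(t-s))
    set n : ℕ := n0 + 1 with hndef
    have hn : (0:ℝ) < (n:ℝ) := by positivity
    set Δ : ℝ := (t - s)/n with hΔdef
    have hΔ0 : 0 ≤ Δ := div_nonneg (by linarith) hn.le
    have hΔsmall : Cmax * Δ ≤ 1/4 := by
      have h4 : 4*Cmax*(t-s) ≤ (n:ℝ) := by
        refine hn0.trans ?_
        rw [hndef]; push_cast; linarith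
      rw [hΔdef, ← mul_div_assoc, div_le_iff₀ hn]
      linarith
    set p : ℕ → ℝ := fun i => s + i*Δ with hpdef
    have hpmono : Monotone p := by
      intro i j hij
      simp only [hpdef]
      have h : (i:ℝ) ≤ j := Nat.cast_le.2 hij
      exact add_le_add_right (mul_le_mul_of_nonneg_right h hΔ0) s
    have hp0 : p 0 = s := by simp [hpdef]
    have hpn : p n = t := by
      simp only [hpdef, hΔdef]
      field_simp
      ring
    have hpIcc : ∀ j, j ≤ n → p j ∈ Icc (0:ℝ) H := by
      intro j hj
      constructor
      · calc (0:ℝ) ≤ s := hs.1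
          _ = p 0 := hp0.symm
          _ ≤ p j := hpmono (Nat.zero_le j)
      · calc p j ≤ p n := hpmono hj
          _ = t := hpn
          _ ≤ H := ht.2
    have hpadj : ∀ j : ℕ, p (j+1) - p j = Δ := by
      intro j; simp only [hpdef]; push_cast; ring
    set Vj : ℕ → ℝ := fun j => (eVariationOn c (Icc (p j) (p (j+1)))).toReal with hVjdef
    have hVj0 : ∀ j, 0 ≤ Vj j := fun j => ENNReal.toReal_nonneg
    have hsumVj : ∑ j ∈ Finset.range n, Vj j ≤ V := by
      have h1 : ∑ j ∈ Finset.range n, eVariationOn c (Icc (p j) (p (j+1)))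
          ≤ ENNReal.ofReal V := by
        rw [var_partition hpmono n, hp0, hpn]
        refine le_trans (eVariationOn.mono c ?_) hvar
        intro x hx; exact ⟨le_trans hs.1 hx.1, le_trans hx.2 ht.2⟩
      have h2 := ENNReal.toReal_mono ENNReal.ofReal_ne_top h1
      rw [ENNReal.toReal_ofReal hV.le] at h2
      rw [ENNReal.toReal_sum (fun j hj => hfinIcc (p j) (p (j+1))
        (hpIcc j (le_of_lt (Finset.mem_range.1 hj)))
        (hpIcc (j+1) (Finset.mem_range.1 hj)))] at h2
      exact h2
    have hVjV : ∀ j, j < n → Vj j ≤ V := by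
      intro j hj
      refine le_trans ?_ hsumVj
      exact Finset.single_le_sum (fun i _ => hVj0 i) (Finset.mem_range.2 hj)
    -- the one-interval estimate
    have both : ∀ j, j < n →
        G (p j) * Real.exp (-(K₀*|c (p (j+1)) - c (p j)| + 4*(Λ*L*Vj j/sW*Δ))) ≤ G (p (j+1)) ∧
        G (p (j+1)) * Real.exp (-(K₀*|c (p (j+1)) - c (p j)| + 4*(Λ*L*Vj j/sW*Δ))) ≤ G (p j) := by
      intro j hj
      have hjn : j + 1 ≤ n := hj
      set s' := p j with hs'def
      set t' := p (j+1) with ht'def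
      have hs' : s' ∈ Icc (0:ℝ) H := hpIcc j hj.le
      have ht' : t' ∈ Icc (0:ℝ) H := hpIcc (j+1) hjn
      have hst' : s' ≤ t' := hpmono (Nat.le_succ j)
      have haw := hwb s' hs'
      have ha0 : 0 < wf s' := lt_of_lt_of_le hwmin0 haw.1
      have hsWa : sW ≤ Real.sqrt (wf s') := Real.sqrt_le_sqrt haw.1
      have hsa0 : 0 < Real.sqrt (wf s') := Real.sqrt_pos.2 ha0
      have hCC0 : 0 ≤ Λ*L*Vj j/sW :=
        div_nonneg (mul_nonneg (mul_nonneg hΛ.le hL.le) (hVj0 j)) hsW.le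
      have hCCmax : Λ*L*Vj j/sW ≤ Cmax := by
        rw [hCmaxdef]
        exact div_le_div₀ (mul_nonneg (mul_nonneg hΛ.le hL.le) hV.le)
          (mul_le_mul_of_nonneg_left (hVjV j hj) (mul_nonneg hΛ.le hL.le)) hsW le_rfl
      have hΔ' : t' - s' = Δ := hpadj j
      have hsmall' : (Λ*L*Vj j/sW) * (t' - s') ≤ 1/4 := by
        rw [hΔ']
        exact le_trans (mul_le_mul_of_nonneg_right hCCmax hΔ0) hΔsmall
      have hsubIcc : Icc s' t' ⊆ Icc (0:ℝ) H :=
        fun x hx => ⟨le_trans hs'.1 hx.1, le_trans hx.2 ht'.2⟩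
      have hsubuIcc : uIcc s' t' ⊆ uIcc 0 H := by
        rw [uIcc_of_le hst', uIcc_of_le hH.le]; exact hsubIcc
      have hg' : IntervalIntegrable g volume s' t' := hg.mono_set hsubuIcc
      have hk' : IntervalIntegrable (fun τ => (c τ*μ^2 - lam)*u τ) volume s' t' :=
        hkint.mono_set hsubuIcc
      have hrepu : ∀ x ∈ Icc s' t', u x = u s' + ∫ τ in s'..x, g τ :=
        fun x hx => rep_of_rep hg hu hs' x (hsubIcc hx)
      have hrepv : ∀ x ∈ Icc s' t', v x = v s' + ∫ τ in s'..x, (c τ*μ^2 - lam)*u τ :=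
        fun x hx => rep_of_rep hkint hv hs' x (hsubIcc hx)
      set F : ℝ → ℝ := fun x => u x^2 + wf s' * v x^2 with hFdef
      set hfn : ℝ → ℝ := fun x => (u x*g x + u x*g x)
        + wf s' * (v x*((c x*μ^2 - lam)*u x) + v x*((c x*μ^2 - lam)*u x)) with hhfndef
      have hucont' : ContinuousOn u (uIcc s' t') :=
        hucont.mono (by rw [uIcc_of_le hst']; exact hsubIcc)
      have hvcont' : ContinuousOn v (uIcc s' t') :=
        hvcont.mono (by rw [uIcc_of_le hst']; exact hsubIcc)
      have hFcont : ContinuousOn F (Icc s' t') := by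
        have h1 : ContinuousOn F (uIcc s' t') :=
          (hucont'.pow 2).add (continuousOn_const.mul (hvcont'.pow 2))
        rwa [uIcc_of_le hst'] at h1
      have hFpos : ∀ x ∈ Icc s' t', 0 ≤ F x := by
        intro x hx
        show 0 ≤ u x^2 + wf s' * v x^2
        positivity
      have hIIug : IntervalIntegrable (fun τ => u τ * g τ) volume s' t' :=
        hg'.continuousOn_mul hucont'
      have hIIvk : IntervalIntegrable (fun τ => v τ * ((c τ*μ^2 - lam)*u τ)) volume s' t' :=
        hk'.continuousOn_mul hvcont'
      have hhint : IntervalIntegrable hfn volume s' t' :=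
        (hIIug.add hIIug).add ((hIIvk.add hIIvk).const_mul (wf s'))
      have hFrep : ∀ x ∈ Icc s' t', F x = F s' + ∫ τ in s'..x, hfn τ := by
        intro x hx
        have h1 := primitive_mul_primitive hst' hg' hg' hrepu hrepu x hx
        have h2 := primitive_mul_primitive hst' hk' hk' hrepv hrepv x hx
        have hxsub : uIcc s' x ⊆ uIcc s' t' := by
          rw [uIcc_of_le hx.1, uIcc_of_le hst']; exact Icc_subset_Icc le_rfl hx.2
        have h3 : (∫ τ in s'..x, hfn τ)
            = (∫ τ in s'..x, (u τ*g τ + u τ*g τ))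
              + ∫ τ in s'..x, wf s' * (v τ*((c τ*μ^2 - lam)*u τ) + v τ*((c τ*μ^2 - lam)*u τ)) :=
          intervalIntegral.integral_add ((hIIug.add hIIug).mono_set hxsub)
            (((hIIvk.add hIIvk).const_mul (wf s')).mono_set hxsub)
        have h4 : (∫ τ in s'..x, wf s' * (v τ*((c τ*μ^2 - lam)*u τ) + v τ*((c τ*μ^2 - lam)*u τ)))
            = wf s' * ∫ τ in s'..x, (v τ*((c τ*μ^2 - lam)*u τ) + v τ*((c τ*μ^2 - lam)*u τ)) :=
          intervalIntegral.integral_const_mul _ _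
        show u x^2 + wf s' * v x^2 = (u s'^2 + wf s' * v s'^2) + ∫ τ in s'..x, hfn τ
        rw [h3, h4]
        linear_combination h1 + wf s' * h2
      have hsubIoc : Ioc s' t' ⊆ Ioo 0 H ∪ {H} := by
        intro x hx
        rcases eq_or_lt_of_le (hx.2.trans ht'.2) with h | h
        · exact Or.inr (by simp [h])
        · exact Or.inl ⟨lt_of_le_of_lt hs'.1 hx.1, h⟩
      have haevg : ∀ᵐ x ∂volume.restrict (Ioc s' t'), v x = c x * g x := by
        have h1 : ∀ᵐ x ∂volume.restrict (Ioo 0 H ∪ {H}), v x = c x * g x := by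
          rw [Measure.restrict_union' (by simp) (by simp)]
          rw [ae_add_measure_iff]
          exact ⟨hvg, by simp [Measure.restrict_singleton]⟩
        exact ae_restrict_of_ae_restrict_of_subset hsubIoc h1
      have haebound : ∀ᵐ x ∂volume.restrict (Ioc s' t'),
          |hfn x| ≤ (Λ*L*Vj j/sW) * F x := by
        filter_upwards [haevg, ae_restrict_mem measurableSet_Ioc] with x hvx hxmem
        have hxIcc' : x ∈ Icc s' t' := Ioc_subset_Icc_self hxmem
        have hxIcc : x ∈ Icc (0:ℝ) H := hsubIcc hxIcc'
        obtain ⟨hc1, hc2⟩ := hc x hxIcc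
        have hcx0 : 0 < c x := lt_of_lt_of_le hcm hc1
        have hDx := hDlb x hxIcc
        have hDx0 : 0 < D x := lt_of_lt_of_le (by positivity) hDx
        have hDxU := hDub x hxIcc
        have hgx : g x = v x / c x := by
          rw [eq_div_iff hcx0.ne', hvx]; ring
        have hDne : lam - c x*μ^2 ≠ 0 := by
          have : (0:ℝ) < lam - c x*μ^2 := hDx0
          exact this.ne'
        have hid : hfn x = 2*u x*v x*(D x*(wf x - wf s')) := by
          show (u x*g x + u x*g x)
            + wf s' * (v x*((c x*μ^2 - lam)*u x) + v x*((c x*μ^2 - lam)*u x))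
            = 2*u x*v x*(D x*(wf x - wf s'))
          rw [hgx]
          simp only [hDdef, hwfdef]
          field_simp [hcx0.ne', hDne]
          ring
        have hAM : 2*(|u x| * |v x|) * Real.sqrt (wf s') ≤ F x := by
          have h1 : (Real.sqrt (wf s'))^2 = wf s' := Real.sq_sqrt ha0.le
          have h2 : 0 ≤ (|u x| - Real.sqrt (wf s')*|v x|)^2 := sq_nonneg _
          have h3 : u x^2 = |u x|^2 := (sq_abs _).symm
          have h4 : v x^2 = |v x|^2 := (sq_abs _).symm
          show 2*(|u x| * |v x|)*Real.sqrt (wf s') ≤ u x^2 + wf s' * v x^2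
          rw [h3, h4]
          have h5 : |u x|^2 - 2*(|u x| * |v x|)*Real.sqrt (wf s') + wf s' * |v x|^2
              = (|u x| - Real.sqrt (wf s') * |v x|)^2 := by
            linear_combination (-(|v x|^2)) * h1
          linarith [h2, h5.symm ▸ h2]
        have habs : |hfn x| = 2*(|u x| * |v x|)*(D x*|wf x - wf s'|) := by
          rw [hid, abs_mul, abs_mul, abs_mul, abs_mul, abs_two, abs_of_pos hDx0]
          ring
        have hwdiff : |wf x - wf s'| ≤ L * Vj j := by
          have h1 := wLip x hxIcc s' hs'
          have h2 : |c x - c s'| ≤ Vj j :=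
            habsVar s' t' hs' ht' x hxIcc' s' (left_mem_Icc.2 hst')
          calc |wf x - wf s'| ≤ L*|c x - c s'| := h1
            _ ≤ L*Vj j := mul_le_mul_of_nonneg_left h2 hL.le
        have hFx0 : 0 ≤ F x := hFpos x hxIcc'
        have h5 : D x*|wf x - wf s'| ≤ Λ*(L*Vj j) :=
          mul_le_mul hDxU hwdiff (abs_nonneg _) hΛ.le
        have h6 : 2*(|u x| * |v x|) ≤ F x / sW := by
          rw [le_div_iff₀ hsW]
          calc 2*(|u x| * |v x|)*sW ≤ 2*(|u x| * |v x|)*Real.sqrt (wf s') :=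
                mul_le_mul_of_nonneg_left hsWa (by positivity)
            _ ≤ F x := hAM
        calc |hfn x| = 2*(|u x| * |v x|)*(D x*|wf x - wf s'|) := habs
          _ ≤ (F x / sW)*(Λ*(L*Vj j)) :=
              mul_le_mul h6 h5 (mul_nonneg hDx0.le (abs_nonneg _))
                (div_nonneg hFx0 hsW.le)
          _ = (Λ*L*Vj j/sW) * F x := by ring
      have henergy := energy_two_sided hst' hCC0 hFcont hFpos hhint hFrep haebound hsmall'
      rw [hΔ'] at henergy
      obtain ⟨hfw, hbw⟩ := henergy
      have hwr1 : wf s' * Real.exp (-(K₀*|c t' - c s'|)) ≤ wf t' := wratio t' ht' s' hs'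
      have hwr2 : wf t' * Real.exp (-(K₀*|c t' - c s'|)) ≤ wf s' := by
        have h1 := wratio s' hs' t' ht'
        rwa [abs_sub_comm (c s') (c t')] at h1
      have hE10 : (0:ℝ) < Real.exp (-(K₀*|c t' - c s'|)) := Real.exp_pos _
      have hE11 : Real.exp (-(K₀*|c t' - c s'|)) ≤ 1 := by
        rw [← Real.exp_zero]
        exact Real.exp_le_exp.2 (neg_nonpos.2 (by positivity))
      have hEE : Real.exp (-(K₀*|c t' - c s'| + 4*(Λ*L*Vj j/sW*Δ)))
          = Real.exp (-(K₀*|c t' - c s'|)) * Real.exp (-(4*(Λ*L*Vj j/sW*Δ))) := by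
        rw [← Real.exp_add]; congr 1; ring
      have hGsF : G s' = F s' := rfl
      have hGtdef : G t' = u t'^2 + wf t' * v t'^2 := rfl
      have hFtdef : F t' = u t'^2 + wf s' * v t'^2 := rfl
      constructor
      · rw [hEE]
        have h2 : Real.exp (-(K₀*|c t' - c s'|)) * F t' ≤ G t' := by
          have e1 : (wf s' * Real.exp (-(K₀*|c t' - c s'|))) * v t'^2 ≤ wf t' * v t'^2 :=
            mul_le_mul_of_nonneg_right hwr1 (sq_nonneg _)
          have e2 : Real.exp (-(K₀*|c t' - c s'|)) * u t'^2 ≤ u t'^2 :=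
            mul_le_of_le_one_left (sq_nonneg _) hE11
          rw [hGtdef, hFtdef]
          have e3 : Real.exp (-(K₀*|c t' - c s'|)) * (u t'^2 + wf s' * v t'^2)
              = Real.exp (-(K₀*|c t' - c s'|))*u t'^2
                + (wf s' * Real.exp (-(K₀*|c t' - c s'|)))*v t'^2 := by ring
          rw [e3]
          linarith [e1, e2]
        calc G s' * (Real.exp (-(K₀*|c t' - c s'|)) * Real.exp (-(4*(Λ*L*Vj j/sW*Δ))))
            = Real.exp (-(K₀*|c t' - c s'|)) * (F s' * Real.exp (-(4*(Λ*L*Vj j/sW*Δ)))) := by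
              rw [hGsF]; ring
          _ ≤ Real.exp (-(K₀*|c t' - c s'|)) * F t' :=
              mul_le_mul_of_nonneg_left hfw hE10.le
          _ ≤ G t' := h2
      · rw [hEE]
        have h2 : Real.exp (-(K₀*|c t' - c s'|)) * G t' ≤ F t' := by
          have e1 : (wf t' * Real.exp (-(K₀*|c t' - c s'|))) * v t'^2 ≤ wf s' * v t'^2 :=
            mul_le_mul_of_nonneg_right hwr2 (sq_nonneg _)
          have e2 : Real.exp (-(K₀*|c t' - c s'|)) * u t'^2 ≤ u t'^2 :=
            mul_le_of_le_one_left (sq_nonneg _) hE11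
          rw [hGtdef, hFtdef]
          have e3 : Real.exp (-(K₀*|c t' - c s'|)) * (u t'^2 + wf t' * v t'^2)
              = Real.exp (-(K₀*|c t' - c s'|))*u t'^2
                + (wf t' * Real.exp (-(K₀*|c t' - c s'|)))*v t'^2 := by ring
          rw [e3]
          linarith [e1, e2]
        calc G t' * (Real.exp (-(K₀*|c t' - c s'|)) * Real.exp (-(4*(Λ*L*Vj j/sW*Δ))))
            = (Real.exp (-(K₀*|c t' - c s'|)) * G t') * Real.exp (-(4*(Λ*L*Vj j/sW*Δ))) := by
              ring
          _ ≤ F t' * Real.exp (-(4*(Λ*L*Vj j/sW*Δ))) :=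
              mul_le_mul_of_nonneg_right h2 (Real.exp_pos _).le
          _ ≤ F s' := hbw
          _ = G s' := hGsF.symm
    set aexp : ℕ → ℝ := fun j => K₀*|c (p (j+1)) - c (p j)| + 4*(Λ*L*Vj j/sW*Δ) with haexpdef
    have haexp0 : ∀ j, j < n → 0 ≤ aexp j := by
      intro j hj
      have h1 : 0 ≤ Λ*L*Vj j/sW*Δ :=
        mul_nonneg (div_nonneg (mul_nonneg (mul_nonneg hΛ.le hL.le) (hVj0 j)) hsW.le) hΔ0
      have h2 : 0 ≤ K₀*|c (p (j+1)) - c (p j)| := by positivity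
      show 0 ≤ K₀*|c (p (j+1)) - c (p j)| + 4*(Λ*L*Vj j/sW*Δ)
      exact add_nonneg h2 (mul_nonneg (by norm_num) h1)
    have hGp0 : ∀ j, j ≤ n → 0 ≤ G (p j) := fun j hj => hG0 (p j) (hpIcc j hj)
    have fwd : ∀ m, m ≤ n → G s * Real.exp (-(∑ j ∈ Finset.range m, aexp j)) ≤ G (p m) := by
      intro m
      induction m with
      | zero => intro _; simp [hp0]
      | succ m ih =>
        intro hm
        have hm' : m ≤ n := le_of_lt (Nat.lt_of_succ_le hm)
        have h1 := ih hm'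
        have h2 := (both m (Nat.lt_of_succ_le hm)).1
        have e1 : Real.exp (-(∑ j ∈ Finset.range (m+1), aexp j))
            = Real.exp (-(∑ j ∈ Finset.range m, aexp j)) * Real.exp (-(aexp m)) := by
          rw [Finset.sum_range_succ, neg_add, Real.exp_add]
        calc G s * Real.exp (-(∑ j ∈ Finset.range (m+1), aexp j))
            = (G s * Real.exp (-(∑ j ∈ Finset.range m, aexp j))) * Real.exp (-(aexp m)) := by
              rw [e1]; ring
          _ ≤ G (p m) * Real.exp (-(aexp m)) :=
              mul_le_mul_of_nonneg_right h1 (Real.exp_pos _).le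
          _ ≤ G (p (m+1)) := h2
    have bwd : ∀ m, m ≤ n → G (p m) * Real.exp (-(∑ j ∈ Finset.range m, aexp j)) ≤ G s := by
      intro m
      induction m with
      | zero => intro _; simp [hp0]
      | succ m ih =>
        intro hm
        have hm' : m ≤ n := le_of_lt (Nat.lt_of_succ_le hm)
        have h1 := ih hm'
        have h2 := (both m (Nat.lt_of_succ_le hm)).2
        have e1 : Real.exp (-(∑ j ∈ Finset.range (m+1), aexp j))
            = Real.exp (-(aexp m)) * Real.exp (-(∑ j ∈ Finset.range m, aexp j)) := by
          rw [Finset.sum_range_succ, neg_add, Real.exp_add, mul_comm]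
        calc G (p (m+1)) * Real.exp (-(∑ j ∈ Finset.range (m+1), aexp j))
            = (G (p (m+1)) * Real.exp (-(aexp m))) * Real.exp (-(∑ j ∈ Finset.range m, aexp j)) := by
              rw [e1]; ring
          _ ≤ G (p m) * Real.exp (-(∑ j ∈ Finset.range m, aexp j)) :=
              mul_le_mul_of_nonneg_right h2 (Real.exp_pos _).le
          _ ≤ G s := h1
    have hsumaexp : ∑ j ∈ Finset.range n, aexp j ≤ K₀*V + 1 := by
      have e1 : ∑ j ∈ Finset.range n, aexp j
          = K₀ * (∑ j ∈ Finset.range n, |c (p (j+1)) - c (p j)|)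
            + (4*Λ*L*Δ/sW) * (∑ j ∈ Finset.range n, Vj j) := by
        simp only [haexpdef]
        rw [Finset.sum_add_distrib, Finset.mul_sum, Finset.mul_sum]
        congr 1
        refine Finset.sum_congr rfl ?_
        intro j _; ring
      have hdsum : ∑ j ∈ Finset.range n, |c (p (j+1)) - c (p j)| ≤ V := by
        refine le_trans (Finset.sum_le_sum ?_) hsumVj
        intro j hj
        have hj' := Finset.mem_range.1 hj
        have h1 := habsVar (p j) (p (j+1)) (hpIcc j hj'.le) (hpIcc (j+1) hj')
        have hst' : p j ≤ p (j+1) := hpmono (Nat.le_succ j)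
        exact h1 (p (j+1)) (right_mem_Icc.2 hst') (p j) (left_mem_Icc.2 hst')
      have h2 : (4*Λ*L*Δ/sW) * (∑ j ∈ Finset.range n, Vj j) ≤ (4*Λ*L*Δ/sW) * V := by
        refine mul_le_mul_of_nonneg_left hsumVj (by positivity)
      have h3 : (4*Λ*L*Δ/sW) * V = 4*(Cmax*Δ) := by rw [hCmaxdef]; field_simp
      have h4 : K₀ * (∑ j ∈ Finset.range n, |c (p (j+1)) - c (p j)|) ≤ K₀ * V :=
        mul_le_mul_of_nonneg_left hdsum hK₀.le
      rw [e1]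
      have h5 : 4*(Cmax*Δ) ≤ 1 := by linarith
      have h6 : (4*Λ*L*Δ/sW) * (∑ j ∈ Finset.range n, Vj j) ≤ 1 := by
        refine le_trans h2 ?_
        rw [h3]; exact h5
      exact add_le_add h4 h6
    have hEVle : EV ≤ Real.exp (-(∑ j ∈ Finset.range n, aexp j)) := by
      rw [hEVdef]
      exact Real.exp_le_exp.2 (by linarith)
    constructor
    · have h1 := fwd n le_rfl
      rw [hpn] at h1
      calc G s * EV ≤ G s * Real.exp (-(∑ j ∈ Finset.range n, aexp j)) :=
            mul_le_mul_of_nonneg_left hEVle (hG0 s hs)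
        _ ≤ G t := h1
    · have h1 := bwd n le_rfl
      rw [hpn] at h1
      calc G t * EV ≤ G t * Real.exp (-(∑ j ∈ Finset.range n, aexp j)) :=
            mul_le_mul_of_nonneg_left hEVle (hG0 t ht)
        _ ≤ G s := h1
  -- a point where u² is at least 1/H
  have hmaxpt : ∃ y₀ ∈ Icc (0:ℝ) H, 1/H ≤ u y₀^2 := by
    by_contra hcon
    push_neg at hcon
    obtain ⟨z, hz, hzmax⟩ := isCompact_Icc.exists_isMaxOn (nonempty_Icc.2 hH.le)
      (hucont.pow 2)
    have hzlt : u z^2 < 1/H := hcon z hz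
    have hccc : ContinuousOn (fun x => u x^2) (uIcc 0 H) := by
      rw [uIcc_of_le hH.le]; exact hucont.pow 2
    have hint : IntervalIntegrable (fun x => u x^2) volume 0 H := hccc.intervalIntegrable
    have h1 : (∫ x in (0:ℝ)..H, u x^2) ≤ ∫ _x in (0:ℝ)..H, u z^2 := by
      refine intervalIntegral.integral_mono_on hH.le hint intervalIntegrable_const ?_
      intro x hx; exact hzmax hx
    rw [hnorm, intervalIntegral.integral_const] at h1
    rw [smul_eq_mul, sub_zero] at h1
    have h2 : H * u z^2 < H * (1/H) := mul_lt_mul_of_pos_left hzlt hH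
    have h3 : H * (1/H) = 1 := by field_simp
    linarith
  obtain ⟨y₀, hy₀, hy₀u⟩ := hmaxpt
  have hGy₀ : 1/H ≤ G y₀ := by
    have h1 : 0 ≤ wf y₀ * v y₀^2 :=
      mul_nonneg (le_trans hwmin0.le (hwb y₀ hy₀).1) (sq_nonneg _)
    show 1/H ≤ u y₀^2 + wf y₀ * v y₀^2
    linarith
  have hGyβ : β ≤ G y := by
    rcases le_total y y₀ with hle | hle
    · have h1 := (prop y hy y₀ hy₀ hle).2
      calc β = (1/H) * EV := by rw [hβdef]; ring
        _ ≤ G y₀ * EV := mul_le_mul_of_nonneg_right hGy₀ hEV.le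
        _ ≤ G y := h1
    · have h1 := (prop y₀ hy₀ y hy hle).1
      calc β = (1/H) * EV := by rw [hβdef]; ring
        _ ≤ G y₀ * EV := mul_le_mul_of_nonneg_right hGy₀ hEV.le
        _ ≤ G y := h1
  have hGyβ' : β ≤ u y^2 + wf y * v y^2 := hGyβ
  have hwfyU : wf y ≤ wmax := (hwb y hy).2
  rcases le_total (β/2) (u y^2) with hcase | hcase
  · have h1 : r^2 ≤ β/2 := by
      rw [hr2]
      calc β/2 * min 1 (cm*ε*μ₁^2) ≤ β/2 * 1 :=
            mul_le_mul_of_nonneg_left (min_le_left _ _) (by positivity)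
        _ = β/2 := mul_one _
    linarith [sq_nonneg (v y)]
  · have h1 : β/2 ≤ wf y * v y^2 := by linarith
    have h2 : wf y * v y^2 ≤ wmax * v y^2 :=
      mul_le_mul_of_nonneg_right hwfyU (sq_nonneg _)
    have h3 : β/2 ≤ wmax * v y^2 := le_trans h1 h2
    have h5 := mul_le_mul_of_nonneg_left h3 (show (0:ℝ) ≤ cm*(ε*μ^2) by positivity)
    have h6 : (cm*(ε*μ^2)) * (wmax * v y^2) = v y^2 := by
      rw [hwmaxdef]; field_simp
    rw [h6] at h5
    have h7 : r^2 ≤ β/2 * (cm*ε*μ₁^2) := by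
      rw [hr2]
      exact mul_le_mul_of_nonneg_left (min_le_right _ _) (by positivity)
    have h8 : β/2 * (cm*ε*μ₁^2) ≤ cm*(ε*μ^2) * (β/2) := by
      calc β/2 * (cm*ε*μ₁^2) = (β/2*(cm*ε))*μ₁^2 := by ring
        _ ≤ (β/2*(cm*ε))*μ^2 := mul_le_mul_of_nonneg_left hμ12 (by positivity)
        _ = cm*(ε*μ^2) * (β/2) := by ring
    linarith [sq_nonneg (u y)]
end
end
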